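/- Let A be an alternating Büchi automaton, ≼_F a reflexive and transitive forward simulation on A such that A is ≼_F-unambiguous, ≼_B a reflexive and transitive backward simulation on A parametrised by ≼_F, and ≼_M a mediated preorder induced by ≼_F and ≼_B. Let T be a partial run of A on a word w with an extension function ext, and let V be a partial run of A on w with T ≼_w-ext V but not T ≼_ext V, and let τ_V ∈ V ∪ {ε} with τ_V ∉ branches(sw_T(V)). Then there exist a partial run W of A on w with T ≼_w-ext W and a path τ_W ∈ W with τ_W ∉ branches(sw_T(W)) such that root(V) ≼_B root(W) and ⟨τ_V, sw_T(V)⟩ ⊏ ⟨τ_W, sw_T(W)⟩. -/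

import Mathlib

/-- An alternating Büchi automaton over alphabet `σ` with states `Q`:
initial state `ι`, transition function `δ` (where `P ∈ δ q a` means `q →a P`),
and accepting states `α`. -/
structure ABA (σ Q : Type*) where
  ι : Q
  δ : Q → σ → Set (Set Q)
  α : Set Q

variable {σ Q : Type*}

/-- The assumption `∅ ∉ δ(q, a)` for all `q, a`. -/
def ABA.NoEmpty (A : ABA σ Q) : Prop := ∀ q a, ∅ ∉ A.δ q a

/-- The set of successors of a path `π` in a tree `T ⊆ Q⁺`. -/
def succs (T : Set (List Q)) (π : List Q) : Set Q := {q | π ++ [q] ∈ T}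

/-- A tree over `Q`: a set of nonempty finite words over `Q`, closed under nonempty
prefixes and containing exactly one word of length one (its root). -/
structure IsTree (T : Set (List Q)) : Prop where
  not_nil : [] ∉ T
  prefix_closed : ∀ π ∈ T, ∀ ρ : List Q, ρ <+: π → ρ ≠ [] → ρ ∈ T
  root : ∃! q : Q, [q] ∈ T

/-- The last state of a path (`A.ι` as a dummy for the empty path). -/
def lastSt (A : ABA σ Q) (π : List Q) : Q := π.getLastD A.ι

/-- A partial run of `A` on `w`: a finite tree in which every path either has no
successors or takes a transition of `A` on the appropriate letter of `w`. -/
structure IsPartialRun (A : ABA σ Q) (w : ℕ → σ) (T : Set (List Q)) : Prop where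
  tree : IsTree T
  finite : T.Finite
  step : ∀ π ∈ T, succs T π = ∅ ∨ succs T π ∈ A.δ (lastSt A π) (w (π.length - 1))

/-- A run of `A` on `w`. -/
structure IsRun (A : ABA σ Q) (w : ℕ → σ) (T : Set (List Q)) : Prop where
  tree : IsTree T
  step : ∀ π ∈ T, succs T π ∈ A.δ (lastSt A π) (w (π.length - 1))

/-- A (finite, maximal) branch of a tree. -/
def IsBranch (T : Set (List Q)) (π : List Q) : Prop := π ∈ T ∧ succs T π = ∅

/-- An infinite branch of a tree: all its nonempty finite prefixes belong to the tree. -/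
def InfBranch (T : Set (List Q)) (ξ : ℕ → Q) : Prop :=
  ∀ n : ℕ, (List.ofFn fun i : Fin (n + 1) => ξ i) ∈ T

/-- A run is accepting iff every infinite branch contains infinitely many accepting
states. -/
def Accepting (A : ABA σ Q) (T : Set (List Q)) : Prop :=
  ∀ ξ : ℕ → Q, InfBranch T ξ → ∀ n : ℕ, ∃ m ≥ n, ξ m ∈ A.α

/-- The language of `A`: the infinite words having an accepting run rooted at `ι`. -/
def ABA.Lang (A : ABA σ Q) : Set (ℕ → σ) :=
  {w | ∃ T : Set (List Q), IsRun A w T ∧ [A.ι] ∈ T ∧ Accepting A T}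

/-- `p ≼_α r` : `p ∈ α ⇒ r ∈ α`. -/
def αle (A : ABA σ Q) (p r : Q) : Prop := p ∈ A.α → r ∈ A.α

/-- A forward simulation on `A`. -/
def ForwardSim (A : ABA σ Q) (F : Q → Q → Prop) : Prop :=
  ∀ p r, F p r → (p ∈ A.α → r ∈ A.α) ∧
    ∀ a P, P ∈ A.δ p a → ∃ R ∈ A.δ r a, ∀ r' ∈ R, ∃ p' ∈ P, F p' r'

/-- A backward simulation on `A` parametrised by the forward simulation `F`. -/
def BackwardSim (A : ABA σ Q) (F B : Q → Q → Prop) : Prop :=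
  ∀ p r, B p r → (p = A.ι → r = A.ι) ∧ (p ∈ A.α → r ∈ A.α) ∧
    ∀ a q P, p ∉ P → insert p P ∈ A.δ q a →
      ∃ s R, r ∉ R ∧ insert r R ∈ A.δ s a ∧ B q s ∧ ∀ y ∈ R, ∃ x ∈ P, F x y

/-- `A` is `≼_F`-unambiguous: no transition has two distinct forward-equivalent states
on its right-hand side. -/
def Unambiguous (A : ABA σ Q) (F : Q → Q → Prop) : Prop :=
  ∀ p a P, P ∈ A.δ p a → ∀ q ∈ P, ∀ r ∈ P, q ≠ r → ¬ (F q r ∧ F r q)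

/-- `M` is a mediated preorder induced by the forward simulation `F` and the backward
simulation `B`: a preorder containing `F`, contained in `F ∘ B⁻¹` (existence of a
mediator), and forward extensible. -/
structure IsMediated (F B M : Q → Q → Prop) : Prop where
  refl : Reflexive M
  trans : Transitive M
  le_f : ∀ q r, F q r → M q r
  mediator : ∀ q r, M q r → ∃ s, F q s ∧ B r s
  fwd_ext : ∀ q r s, M q r → F r s → M q s

/-- An extension function for the partial run `T`: it assigns to every branch `π` of `T`
a state `ext π ≼_M leaf(π)`. -/
def IsExtFun (A : ABA σ Q) (M : Q → Q → Prop) (T : Set (List Q))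
    (ext : List Q → Q) : Prop :=
  ∀ π, IsBranch T π → M (ext π) (lastSt A π)

/-- `π ≼_ext ψ` : `ψ` strongly covers `π` w.r.t. `ext`. -/
def BrExt (A : ABA σ Q) (F : Q → Q → Prop) (ext : List Q → Q) (π ψ : List Q) : Prop :=
  List.Forall₂ (αle A) π ψ ∧ F (ext π) (lastSt A ψ)

/-- `π ≼_w-ext ψ` : `ψ` weakly covers `π` w.r.t. `ext`. -/
def BrWExt (A : ABA σ Q) (M : Q → Q → Prop) (ext : List Q → Q) (π ψ : List Q) : Prop :=
  List.Forall₂ (αle A) π ψ ∧ M (ext π) (lastSt A ψ)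

/-- `T ≼_ext U` : `U` strongly covers `T` w.r.t. `ext` (every branch of `U` strongly
covers some branch of `T`, and the root of `U` backward simulates the root of `T`). -/
def TrExt (A : ABA σ Q) (F B : Q → Q → Prop) (ext : List Q → Q)
    (T U : Set (List Q)) : Prop :=
  (∀ ψ, IsBranch U ψ → ∃ π, IsBranch T π ∧ BrExt A F ext π ψ) ∧
  ∀ p r, [p] ∈ T → [r] ∈ U → B p r

/-- `T ≼_w-ext U` : `U` weakly covers `T` w.r.t. `ext`. -/
def TrWExt (A : ABA σ Q) (M B : Q → Q → Prop) (ext : List Q → Q)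
    (T U : Set (List Q)) : Prop :=
  (∀ ψ, IsBranch U ψ → ∃ π, IsBranch T π ∧ BrWExt A M ext π ψ) ∧
  ∀ p r, [p] ∈ T → [r] ∈ U → B p r

/-- `sw_T(V)` : the tree of all nonempty prefixes of the strict weakly covering branches
of `V` w.r.t. `T` and `ext` (branches of `V` strongly covering no branch of `T`). -/
def swT (A : ABA σ Q) (F : Q → Q → Prop) (ext : List Q → Q)
    (T V : Set (List Q)) : Set (List Q) :=
  {ρ | ρ ≠ [] ∧ ∃ ψ, IsBranch V ψ ∧ (¬ ∃ π, IsBranch T π ∧ BrExt A F ext π ψ) ∧ ρ <+: ψ}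

/-- `X ⊖_i τ` (for `1 ≤ i ≤ |τ|`, all successors allowed when `i = |τ|`): the union of
the branches of the suffix trees `X(τ^i q)` for successors `q ≠ τ_{i+1}` of `τ^i`. -/
def ominus (X : Set (List Q)) (τ : List Q) (i : ℕ) : Set (List Q) :=
  {χ | χ ≠ [] ∧ χ.head? ≠ τ[i]? ∧ τ.take i ++ χ ∈ X ∧ succs X (τ.take i ++ χ) = ∅}

/-- The tree decomposition `⟨τ, X⟩ = X ⊖_1 τ, …, X ⊖_{|τ|} τ`, with
`⟨ε, X⟩ = branches(X)`. -/
def seqOf (X : Set (List Q)) : List Q → List (Set (List Q))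
  | [] => [{π | IsBranch X π}]
  | τ@(_ :: _) => (List.range τ.length).map fun i => ominus X τ (i + 1)

/-- `P ≼_F^∀∃ P'` for sets of paths, compared componentwise. -/
def SetLe (F : Q → Q → Prop) (P P' : Set (List Q)) : Prop :=
  ∀ φ' ∈ P', ∃ φ ∈ P, List.Forall₂ F φ φ'

/-- `P ≺_F^∀∃ P'` : `P ≼_F^∀∃ P'` but not `P' ≼_F^∀∃ P`. -/
def SetLt (F : Q → Q → Prop) (P P' : Set (List Q)) : Prop :=
  SetLe F P P' ∧ ¬ SetLe F P' P

/-- `S ⊏ S'` for finite sequences of sets of paths. -/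
def SeqLt (F : Q → Q → Prop) (S S' : List (Set (List Q))) : Prop :=
  ∃ k < min S.length S'.length,
    SetLt F (S.getD k ∅) (S'.getD k ∅) ∧
    ∀ j < k, SetLe F (S.getD j ∅) (S'.getD j ∅)


section Stmt12Aux

variable {σ Q : Type*}

private lemma app_singl_inj {l₁ l₂ : List Q} {a b : Q} (h : l₁ ++ [a] = l₂ ++ [b]) :
    l₁ = l₂ ∧ a = b := by
  obtain ⟨h1, h2⟩ := List.append_inj' h rfl
  exact ⟨h1, by simpa using h2⟩

private lemma forall₂_comp {r₁ r₂ r₃ : Q → Q → Prop}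
    (h : ∀ a b c, r₁ a b → r₂ b c → r₃ a c) :
    ∀ {l₁ l₂ l₃ : List Q}, List.Forall₂ r₁ l₁ l₂ → List.Forall₂ r₂ l₂ l₃ →
      List.Forall₂ r₃ l₁ l₃ := by
  intro l₁ l₂ l₃ h₁ h₂
  induction h₂ generalizing l₁ with
  | nil => cases h₁; exact List.Forall₂.nil
  | cons hbc _ ih =>
    cases h₁ with
    | cons hab htl => exact List.Forall₂.cons (h _ _ _ hab hbc) (ih htl)

private lemma mem_ne_nil {X : Set (List Q)} (hX : IsTree X) {θ : List Q} (hθ : θ ∈ X) :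
    θ ≠ [] := fun h => hX.not_nil (h ▸ hθ)

private lemma tree_take_mem {X : Set (List Q)} (hX : IsTree X) {θ : List Q} (hθ : θ ∈ X)
    {i : ℕ} (hi : 1 ≤ i) : θ.take i ∈ X := by
  refine hX.prefix_closed θ hθ _ (List.take_prefix i θ) ?_
  intro h
  rcases List.take_eq_nil_iff.mp h with h | h
  · omega
  · exact mem_ne_nil hX hθ h

private lemma tree_take_one {X : Set (List Q)} (hX : IsTree X) {θ : List Q} (hθ : θ ∈ X)
    {r : Q} (hr : [r] ∈ X) : θ.take 1 = [r] := by
  obtain ⟨r₀, _, hu⟩ := hX.root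
  cases θ with
  | nil => exact absurd hθ hX.not_nil
  | cons a t =>
    have ha : [a] ∈ X := by
      have := tree_take_mem hX hθ (i := 1) le_rfl
      simpa using this
    simp [hu a ha, hu r hr]

private lemma exists_branch_ge {X : Set (List Q)} (hX : IsTree X) (hfin : X.Finite)
    {θ : List Q} (hθ : θ ∈ X) : ∃ ψ, θ <+: ψ ∧ IsBranch X ψ := by
  have hSfin : {ψ ∈ X | θ <+: ψ}.Finite := hfin.subset (Set.sep_subset _ _)
  obtain ⟨ψ, hψ, hmax⟩ := Set.Finite.exists_maximalFor List.length _ hSfin ⟨θ, hθ, List.prefix_rfl⟩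
  refine ⟨ψ, hψ.2, hψ.1, ?_⟩
  ext y
  simp only [succs, Set.mem_setOf_eq, Set.mem_empty_iff_false, iff_false]
  intro hy
  have hmem : ψ ++ [y] ∈ {ψ ∈ X | θ <+: ψ} :=
    ⟨hy, hψ.2.trans ⟨[y], rfl⟩⟩
  have := hmax hmem (by simp)
  simp at this

private lemma lastSt_concat (A : ABA σ Q) (l : List Q) (y : Q) :
    lastSt A (l ++ [y]) = y := List.getLastD_concat

private lemma take_succ_getD (l : List Q) {i : ℕ} (hi : i < l.length) (d : Q) :
    l.take (i + 1) = l.take i ++ [l.getD i d] := by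
  rw [List.take_succ, List.getD_eq_getElem?_getD, List.getElem?_eq_getElem hi]
  rfl

private lemma lastSt_take (A : ABA σ Q) {l : List Q} {i : ℕ} (h1 : 1 ≤ i)
    (h2 : i ≤ l.length) : lastSt A (l.take i) = l.getD (i - 1) A.ι := by
  obtain ⟨j, rfl⟩ : ∃ j, i = j + 1 := ⟨i - 1, (Nat.succ_pred_eq_of_pos h1).symm⟩
  rw [take_succ_getD l (by omega) A.ι, lastSt_concat]
  simp

private lemma finite_len_eq [Finite Q] (n : ℕ) : {l : List Q | l.length = n}.Finite := by
  induction n with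
  | zero => simp [List.length_eq_zero_iff]
  | succ n ih =>
    have hsub : {l : List Q | l.length = n + 1} ⊆
        (fun p : Q × List Q => p.1 :: p.2) '' (Set.univ ×ˢ {l | l.length = n}) := by
      rintro (_ | ⟨a, t⟩) h
      · simp at h
      · exact ⟨(a, t), by simpa using Nat.succ_injective (by simpa using h), rfl⟩
    exact Set.Finite.subset ((Set.finite_univ.prod ih).image _) hsub

private lemma finite_len_le [Finite Q] (n : ℕ) : {l : List Q | l.length ≤ n}.Finite := by
  have : {l : List Q | l.length ≤ n} = ⋃ k ∈ Set.Iic n, {l : List Q | l.length = k} := by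
    ext l; simp [Nat.lt_succ_iff]
  rw [this]
  exact (Set.finite_Iic n).biUnion fun k _ => finite_len_eq k

end Stmt12Aux


section Stmt12Surg

variable {σ Q : Type*}

private lemma forall₂_concat {F : Q → Q → Prop} {u v : List Q} {a b : Q}
    (h : List.Forall₂ F u v) (hab : F a b) : List.Forall₂ F (u ++ [a]) (v ++ [b]) :=
  List.rel_append h (List.forall₂_cons.mpr ⟨hab, List.Forall₂.nil⟩)

private lemma head?_append_left {u : List Q} (l : List Q) (h : u ≠ []) :
    (u ++ l).head? = u.head? := by
  cases u with
  | nil => simp at h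
  | cons a t => rfl

private lemma getElem?_append_head (l v : List Q) : (l ++ v)[l.length]? = v.head? := by
  rw [List.getElem?_append_right le_rfl]
  simp [List.head?_eq_getElem?]

/-- Branches of `sw_T(V)` are exactly the strict weakly covering branches of `V`. -/
private lemma branch_swT_iff (A : ABA σ Q) (F : Q → Q → Prop) (ext : List Q → Q)
    {T V : Set (List Q)} (hV : IsTree V) {φ : List Q} :
    IsBranch (swT A F ext T V) φ ↔
      IsBranch V φ ∧ ¬ ∃ π, IsBranch T π ∧ BrExt A F ext π φ := by
  constructor
  · rintro ⟨⟨hne, ψ, hψb, hψs, hpre⟩, hsucc⟩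
    have hφψ : φ = ψ := by
      obtain ⟨rest, rfl⟩ := hpre
      cases rest with
      | nil => simp
      | cons r0 rs =>
        exfalso
        have hmem : φ ++ [r0] ∈ swT A F ext T V := by
          refine ⟨by simp, φ ++ r0 :: rs, hψb, hψs, ⟨rs, by simp⟩⟩
        have : r0 ∈ succs (swT A F ext T V) φ := hmem
        rw [hsucc] at this
        exact this
    subst hφψ
    exact ⟨hψb, hψs⟩
  · rintro ⟨hbr, hstr⟩
    refine ⟨⟨mem_ne_nil hV hbr.1, φ, hbr, hstr, List.prefix_rfl⟩, ?_⟩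
    ext y
    simp only [succs, Set.mem_setOf_eq, Set.mem_empty_iff_false, iff_false]
    rintro ⟨hne2, ψ', hψ'b, _, hpre'⟩
    have : φ ++ [y] ∈ V :=
      hV.prefix_closed ψ' hψ'b.1 _ hpre' (by simp)
    have : y ∈ succs V φ := this
    rw [hbr.2] at this
    exact this

end Stmt12Surg


section Stmt12WM

variable {σ Q : Type*}

/-- spine prefix of length `i`. -/
private def spineL (σf : ℕ → Q) (i : ℕ) : List Q := (List.range i).map σf

private lemma spineL_length (σf : ℕ → Q) (i : ℕ) : (spineL σf i).length = i := by
  simp [spineL]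

private lemma spineL_succ (σf : ℕ → Q) (i : ℕ) :
    spineL σf (i + 1) = spineL σf i ++ [σf i] := by
  simp [spineL, List.range_succ]

private lemma spineL_ne_nil (σf : ℕ → Q) {i : ℕ} (hi : 1 ≤ i) : spineL σf i ≠ [] := by
  obtain ⟨j, rfl⟩ : ∃ j, i = j + 1 := ⟨i - 1, by omega⟩
  simp [spineL_succ]

private lemma spineL_take (σf : ℕ → Q) (i j : ℕ) :
    (spineL σf i).take j = spineL σf (min j i) := by
  simp [spineL, ← List.map_take, List.take_range]

private lemma spineL_getElem? (σf : ℕ → Q) {i j : ℕ} (h : j < i) :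
    (spineL σf i)[j]? = some (σf j) := by
  simp [spineL, List.getElem?_map, List.getElem?_range h]

private lemma lastSt_spineL (A : ABA σ Q) (σf : ℕ → Q) {i : ℕ} (hi : 1 ≤ i) :
    lastSt A (spineL σf i) = σf (i - 1) := by
  obtain ⟨j, rfl⟩ : ∃ j, i = j + 1 := ⟨i - 1, by omega⟩
  rw [spineL_succ, lastSt_concat]
  simp

/-- All data and properties of the surgery construction. -/
private structure Surg (A : ABA σ Q) (w : ℕ → σ) (F B : Q → Q → Prop)
    (V : Set (List Q)) (φs : List Q) : Type _ where
  σf : ℕ → Q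
  Rf : ℕ → Set Q
  sx : ℕ → Q → Q
  fR : List Q → List Q → Set Q
  fx : List Q → List Q → Q → Q
  hBc : ∀ i < φs.length, B (φs.getD i A.ι) (σf i)
  hnotmem : ∀ j, 1 ≤ j → j < φs.length → σf j ∉ Rf j
  htrans : ∀ j, 1 ≤ j → j < φs.length →
    insert (σf j) (Rf j) ∈ A.δ (σf (j - 1)) (w (j - 1))
  hside : ∀ j y, 1 ≤ j → j < φs.length → y ∈ Rf j →
    sx j y ∈ succs V (φs.take j) ∧ sx j y ≠ φs.getD j A.ι ∧ F (sx j y) y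
  hfR : ∀ ρ θ, succs V ρ ∈ A.δ (lastSt A ρ) (w (ρ.length - 1)) →
    F (lastSt A ρ) (lastSt A θ) →
    fR ρ θ ∈ A.δ (lastSt A θ) (w (ρ.length - 1)) ∧
      ∀ y' ∈ fR ρ θ, fx ρ θ y' ∈ succs V ρ ∧ F (fx ρ θ y') y'
  hfR0 : ∀ ρ θ, ¬ (succs V ρ ∈ A.δ (lastSt A ρ) (w (ρ.length - 1)) ∧
    F (lastSt A ρ) (lastSt A θ)) → fR ρ θ = ∅

/-- Membership (pairs of a `V`-node and a `W`-node) in the surgery tree. -/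
private inductive WM {σ Q : Type*} {A : ABA σ Q} {w : ℕ → σ} {F B : Q → Q → Prop}
    {V : Set (List Q)} {φs : List Q} (S : Surg A w F B V φs) : List Q → List Q → Prop
  | spine (i : ℕ) (h1 : 1 ≤ i) (h2 : i ≤ φs.length) :
      WM S (φs.take i) (spineL S.σf i)
  | side (j : ℕ) (y : Q) (h1 : 1 ≤ j) (h2 : j < φs.length) (hy : y ∈ S.Rf j) :
      WM S (φs.take j ++ [S.sx j y]) (spineL S.σf j ++ [y])
  | fwd (ρ θ : List Q) (y' : Q) (hWM : WM S ρ θ)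
      (hnsp : ¬ ∃ i, i ≤ φs.length ∧ θ = spineL S.σf i)
      (hy' : y' ∈ S.fR ρ θ) : WM S (ρ ++ [S.fx ρ θ y']) (θ ++ [y'])

variable {A : ABA σ Q} {w : ℕ → σ} {F B : Q → Q → Prop}
  {V : Set (List Q)} {φs : List Q}

/-- The deviation structure of non-spine nodes. -/
private def DevData (S : Surg A w F B V φs) (ρ θ : List Q) : Prop :=
  ∃ j u v, 1 ≤ j ∧ j < φs.length ∧ ρ = φs.take j ++ u ∧ θ = spineL S.σf j ++ v ∧
    u ≠ [] ∧ v ≠ [] ∧ List.Forall₂ F u v ∧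
    (∃ y ∈ S.Rf j, v.head? = some y) ∧
    (∃ x, u.head? = some x ∧ x ∈ succs V (φs.take j) ∧ x ≠ φs.getD j A.ι) ∧
    F (lastSt A ρ) (lastSt A θ)

private lemma WM.shape {S : Surg A w F B V φs} (hV : IsPartialRun A w V)
    (hφs : φs ∈ V) (hne : A.NoEmpty) {ρ θ : List Q} (h : WM S ρ θ) :
    ρ.length = θ.length ∧ ρ ∈ V ∧ ρ ≠ [] ∧
      ((∃ i, 1 ≤ i ∧ i ≤ φs.length ∧ ρ = φs.take i ∧ θ = spineL S.σf i) ∨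
        DevData S ρ θ) := by
  induction h with
  | spine i h1 h2 =>
    refine ⟨by simp [spineL_length]; omega, tree_take_mem hV.tree hφs h1, ?_, Or.inl ⟨i, h1, h2, rfl, rfl⟩⟩
    have := mem_ne_nil hV.tree hφs
    intro hc
    rcases List.take_eq_nil_iff.mp hc with hc | hc
    · omega
    · exact this hc
  | side j y h1 h2 hy =>
    obtain ⟨hmem, hne', hFxy⟩ := S.hside j y h1 h2 hy
    refine ⟨by simp [spineL_length]; omega, hmem, by simp, Or.inr ?_⟩
    refine ⟨j, [S.sx j y], [y], h1, h2, rfl, rfl, by simp, by simp, ?_, ⟨y, hy, rfl⟩,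
      ⟨S.sx j y, rfl, hmem, hne'⟩, ?_⟩
    · exact List.forall₂_cons.mpr ⟨hFxy, List.Forall₂.nil⟩
    · rw [lastSt_concat, lastSt_concat]; exact hFxy
  | fwd ρ θ y' hWM hnsp hy' ih =>
    obtain ⟨hlen, hρV, hρne, hdis⟩ := ih
    have hfRne : S.fR ρ θ ≠ ∅ := by
      intro hc; rw [hc] at hy'; exact hy'
    have hcond : succs V ρ ∈ A.δ (lastSt A ρ) (w (ρ.length - 1)) ∧
        F (lastSt A ρ) (lastSt A θ) := by
      by_contra hc
      exact hfRne (S.hfR0 ρ θ hc)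
    obtain ⟨hx'mem, hFx'⟩ := (S.hfR ρ θ hcond.1 hcond.2).2 y' hy'
    have hmem2 : ρ ++ [S.fx ρ θ y'] ∈ V := hx'mem
    refine ⟨by simp [hlen], hmem2, by simp, Or.inr ?_⟩
    rcases hdis with ⟨i, h1, h2, hρeq, hθeq⟩ | ⟨j, u, v, h1, h2, hρeq, hθeq, hune, hvne, hF2, hvy, hux, hlast⟩
    · exact absurd ⟨i, h2, hθeq⟩ hnsp
    · refine ⟨j, u ++ [S.fx ρ θ y'], v ++ [y'], h1, h2, by rw [hρeq, List.append_assoc],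
        by rw [hθeq, List.append_assoc], by simp, by simp, forall₂_concat hF2 hFx', ?_, ?_, ?_⟩
      · obtain ⟨y, hy, hvh⟩ := hvy
        exact ⟨y, hy, by rw [head?_append_left _ hvne]; exact hvh⟩
      · obtain ⟨x, hxh, hxm, hxne⟩ := hux
        exact ⟨x, by rw [head?_append_left _ hune]; exact hxh, hxm, hxne⟩
      · rw [lastSt_concat, lastSt_concat]; exact hFx'

end Stmt12WM


section Stmt12WTree

variable {σ Q : Type*} {A : ABA σ Q} {w : ℕ → σ} {F B : Q → Q → Prop}
  {V : Set (List Q)} {φs : List Q}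

/-- The surgery tree. -/
private def Wset (S : Surg A w F B V φs) : Set (List Q) := {θ | ∃ ρ, WM S ρ θ}

private lemma DevData.not_spine {S : Surg A w F B V φs} {ρ θ : List Q}
    (h : DevData S ρ θ) : ¬ ∃ i, i ≤ φs.length ∧ θ = spineL S.σf i := by
  rintro ⟨i, hi, rfl⟩
  obtain ⟨j, u, v, h1, h2, hρeq, hθeq, hune, hvne, hF2, ⟨y, hy, hvh⟩, hux, hlast⟩ := h
  have hlen : i = j + v.length := by
    have := congrArg List.length hθeq
    simpa [spineL_length] using this
  have hj : j < i := by
    have : 1 ≤ v.length := List.length_pos_iff.mpr hvne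
    omega
  have hgl : (spineL S.σf i)[j]? = some (S.σf j) := spineL_getElem? _ hj
  have hgr : (spineL S.σf j ++ v)[j]? = v.head? := by
    have := getElem?_append_head (spineL S.σf j) v
    rwa [spineL_length] at this
  rw [hθeq, hgr, hvh] at hgl
  exact S.hnotmem j h1 h2 (Option.some_injective _ hgl.symm ▸ hy)

private lemma spineL_eq_concat {S : Surg A w F B V φs} {i : ℕ} {l : List Q} {q : Q}
    (h : spineL S.σf i = l ++ [q]) : i = l.length + 1 ∧ l = spineL S.σf l.length ∧
      q = S.σf l.length := by
  have hlen : i = l.length + 1 := by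
    have := congrArg List.length h
    simpa [spineL_length] using this
  subst hlen
  rw [spineL_succ] at h
  obtain ⟨h1, h2⟩ := app_singl_inj h
  exact ⟨rfl, h1.symm, h2.symm⟩

private lemma WM.cases_eq {S : Surg A w F B V φs} {ρ θ : List Q} (h : WM S ρ θ) :
    (∃ i, 1 ≤ i ∧ i ≤ φs.length ∧ ρ = φs.take i ∧ θ = spineL S.σf i) ∨
    (∃ j y, 1 ≤ j ∧ j < φs.length ∧ y ∈ S.Rf j ∧
      ρ = φs.take j ++ [S.sx j y] ∧ θ = spineL S.σf j ++ [y]) ∨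
    (∃ ρ₀ θ₀ y', WM S ρ₀ θ₀ ∧ (¬ ∃ i, i ≤ φs.length ∧ θ₀ = spineL S.σf i) ∧
      y' ∈ S.fR ρ₀ θ₀ ∧ ρ = ρ₀ ++ [S.fx ρ₀ θ₀ y'] ∧ θ = θ₀ ++ [y']) := by
  cases h with
  | spine i h1 h2 => exact Or.inl ⟨i, h1, h2, rfl, rfl⟩
  | side j y h1 h2 hy => exact Or.inr (Or.inl ⟨j, y, h1, h2, hy, rfl, rfl⟩)
  | fwd ρ₀ θ₀ y' hWM hnsp hy' => exact Or.inr (Or.inr ⟨ρ₀, θ₀, y', hWM, hnsp, hy', rfl, rfl⟩)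

private lemma WM.unique {S : Surg A w F B V φs} {ρ ρ' θ : List Q}
    (h : WM S ρ θ) (h' : WM S ρ' θ) : ρ = ρ' := by
  induction h generalizing ρ' with
  | spine i h1 h2 =>
    rcases h'.cases_eq with ⟨i', h1', h2', hρ', hθ'⟩ |
      ⟨j, y, h1', h2', hy, hρ', hθ'⟩ | ⟨ρ₀, θ₀, y', hWM, hnsp, hy', hρ', hθ'⟩
    · have hii : i = i' := by
        have hl := congrArg List.length hθ'
        simp [spineL_length] at hl
        omega
      rw [hρ', hii]
    · exfalso
      obtain ⟨_, _, hq⟩ := spineL_eq_concat hθ'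
      rw [spineL_length] at hq
      exact S.hnotmem j h1' h2' (hq ▸ hy)
    · exfalso
      obtain ⟨_, hθ₀, _⟩ := spineL_eq_concat hθ'
      exact hnsp ⟨θ₀.length, by
        have := congrArg List.length hθ'
        simp [spineL_length] at this
        omega, hθ₀⟩
  | side j y h1 h2 hy =>
    rcases h'.cases_eq with ⟨i', h1', h2', hρ', hθ'⟩ |
      ⟨j', y'', h1', h2', hy', hρ', hθ'⟩ | ⟨ρ₀, θ₀, y', hWM, hnsp, hy', hρ', hθ'⟩
    · exfalso
      obtain ⟨_, _, hq⟩ := spineL_eq_concat hθ'.symm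
      rw [spineL_length] at hq
      exact S.hnotmem j h1 h2 (hq ▸ hy)
    · obtain ⟨hsp, hyy⟩ := app_singl_inj hθ'.symm
      have hjj : j' = j := by
        have hl := congrArg List.length hsp
        simp [spineL_length] at hl
        omega
      subst hjj
      rw [hρ', hyy]
    · exfalso
      obtain ⟨hsp, hyy⟩ := app_singl_inj hθ'
      exact hnsp ⟨j, le_of_lt h2, hsp.symm⟩
  | fwd ρ₀ θ₀ y' hWM hnsp hy' ih =>
    rcases h'.cases_eq with ⟨i', h1', h2', hρ', hθ'⟩ |
      ⟨j', y'', h1', h2', hy', hρ', hθ'⟩ | ⟨ρ₁, θ₁, y₁, hWM', hnsp', hy₁, hρ', hθ'⟩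
    · exfalso
      obtain ⟨_, hθ₀, _⟩ := spineL_eq_concat hθ'.symm
      exact hnsp ⟨θ₀.length, by
        have := congrArg List.length hθ'
        simp [spineL_length] at this
        omega, hθ₀⟩
    · exfalso
      obtain ⟨hsp, _⟩ := app_singl_inj hθ'
      exact hnsp ⟨j', le_of_lt h2', hsp⟩
    · obtain ⟨hθθ, hyy⟩ := app_singl_inj hθ'
      subst hyy
      have hρ₁ : ρ₀ = ρ₁ := ih (hθθ ▸ hWM')
      rw [hρ', ← hρ₁, ← hθθ]

end Stmt12WTree


section Stmt12WTree2

variable {σ Q : Type*} {A : ABA σ Q} {w : ℕ → σ} {F B : Q → Q → Prop}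
  {V : Set (List Q)} {φs : List Q} {S : Surg A w F B V φs}

private lemma spine_mem_Wset {i : ℕ} (h1 : 1 ≤ i) (h2 : i ≤ φs.length) :
    spineL S.σf i ∈ Wset S := ⟨_, WM.spine i h1 h2⟩

private lemma spine_prefix_mem {i : ℕ} (h3 : i ≤ φs.length) {pre : List Q}
    (hpre : pre <+: spineL S.σf i) (hne : pre ≠ []) : pre ∈ Wset S := by
  have hlen : pre.length ≤ i := by
    have := hpre.length_le
    rwa [spineL_length] at this
  have h1 : 1 ≤ pre.length := List.length_pos_iff.mpr hne
  have heq : pre = spineL S.σf pre.length := by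
    have h := List.prefix_iff_eq_take.mp hpre
    rwa [spineL_take, min_eq_left hlen] at h
  rw [heq]
  exact spine_mem_Wset h1 (le_trans hlen h3)

private lemma Wset_prefix_closed {ρ θ : List Q} (h : WM S ρ θ) :
    ∀ pre, pre <+: θ → pre ≠ [] → pre ∈ Wset S := by
  induction h with
  | spine i h1 h2 => exact fun pre hpre hne => spine_prefix_mem h2 hpre hne
  | side j y h1 h2 hy =>
    intro pre hpre hne
    rcases List.prefix_concat_iff.mp hpre with rfl | hpre'
    · exact ⟨_, WM.side j y h1 h2 hy⟩
    · exact spine_prefix_mem (le_of_lt h2) hpre' hne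
  | fwd ρ₀ θ₀ y' hWM hnsp hy' ih =>
    intro pre hpre hne
    rcases List.prefix_concat_iff.mp hpre with rfl | hpre'
    · exact ⟨_, WM.fwd ρ₀ θ₀ y' hWM hnsp hy'⟩
    · exact ih pre hpre' hne

private lemma spineL_one : spineL S.σf 1 = [S.σf 0] := by
  simp [spineL, List.range_succ]

private lemma Wset_tree (hV : IsPartialRun A w V) (hφs : φs ∈ V) (hne : A.NoEmpty) :
    IsTree (Wset S) := by
  have hn1 : 1 ≤ φs.length := List.length_pos_iff.mpr (mem_ne_nil hV.tree hφs)
  refine ⟨?_, ?_, ?_⟩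
  · rintro ⟨ρ, hρ⟩
    obtain ⟨hlen, _, hρne, _⟩ := hρ.shape hV hφs hne
    exact hρne (List.length_eq_zero_iff.mp (by simpa using hlen))
  · rintro π ⟨ρ, hρ⟩ pre hpre hne'
    exact Wset_prefix_closed hρ pre hpre hne'
  · refine ⟨S.σf 0, ?_, ?_⟩
    · have h := spine_mem_Wset (S := S) le_rfl hn1
      rwa [spineL_one] at h
    · rintro q ⟨ρ, hρ⟩
      rcases hρ.cases_eq with ⟨i, h1, h2, hρ', hθ'⟩ |
        ⟨j, y, h1, h2, hy, hρ', hθ'⟩ | ⟨ρ₀, θ₀, y', hWM, hnsp, hy', hρ', hθ'⟩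
      · have : i = 1 := by
          have hl := congrArg List.length hθ'
          simp [spineL_length] at hl
          omega
        subst this
        rw [spineL_one] at hθ'
        simpa using hθ'
      · exfalso
        have hl := congrArg List.length hθ'
        simp [spineL_length] at hl
        omega
      · exfalso
        obtain ⟨hlen, _, hρne, _⟩ := hWM.shape hV hφs hne
        have hθ₀ : θ₀ = [] := by
          have hl := congrArg List.length hθ'
          simp only [List.length_append, List.length_cons, List.length_nil] at hl
          exact List.length_eq_zero_iff.mp (by omega)
        rw [hθ₀] at hlen
        exact hρne (List.length_eq_zero_iff.mp (by simpa using hlen))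

private lemma Wset_finite [Finite Q] (hV : IsPartialRun A w V) (hφs : φs ∈ V)
    (hne : A.NoEmpty) : (Wset S).Finite := by
  obtain ⟨m, hm⟩ := (hV.finite.image List.length).bddAbove
  refine (finite_len_le m).subset ?_
  rintro θ ⟨ρ, hρ⟩
  obtain ⟨hlen, hρV, _, _⟩ := hρ.shape hV hφs hne
  have : ρ.length ≤ m := hm ⟨ρ, hρV, rfl⟩
  simpa [← hlen] using this

private lemma succs_spine_lt {i : ℕ} (h1 : 1 ≤ i) (h2 : i < φs.length) :
    succs (Wset S) (spineL S.σf i) = insert (S.σf i) (S.Rf i) := by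
  ext q
  constructor
  · rintro ⟨ρ, hρ⟩
    rcases hρ.cases_eq with ⟨i', h1', h2', hρ', hθ'⟩ |
      ⟨j, y, h1', h2', hy, hρ', hθ'⟩ | ⟨ρ₀, θ₀, y', hWM, hnsp, hy', hρ', hθ'⟩
    · obtain ⟨hlen, hsp, hq⟩ := spineL_eq_concat hθ'.symm
      rw [spineL_length] at hq
      exact Or.inl hq
    · obtain ⟨hsp, hq⟩ := app_singl_inj hθ'
      have hji : j = i := by
        have hl := congrArg List.length hsp
        simp [spineL_length] at hl
        omega
      subst hji
      rw [hq]
      exact Or.inr hy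
    · exfalso
      obtain ⟨hsp, _⟩ := app_singl_inj hθ'
      exact hnsp ⟨i, le_of_lt h2, hsp.symm⟩
  · rintro (rfl | hq)
    · exact ⟨_, spineL_succ S.σf i ▸ WM.spine (i + 1) (by omega) (by omega)⟩
    · exact ⟨_, WM.side i q h1 h2 hq⟩

private lemma succs_spine_top (hV : IsPartialRun A w V) (hφs : φs ∈ V) (hne : A.NoEmpty) :
    succs (Wset S) (spineL S.σf φs.length) = ∅ := by
  ext q
  simp only [succs, Set.mem_setOf_eq, Set.mem_empty_iff_false, iff_false]
  rintro ⟨ρ, hρ⟩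
  rcases hρ.cases_eq with ⟨i', h1', h2', hρ', hθ'⟩ |
    ⟨j, y, h1', h2', hy, hρ', hθ'⟩ | ⟨ρ₀, θ₀, y', hWM, hnsp, hy', hρ', hθ'⟩
  · obtain ⟨hlen, _, _⟩ := spineL_eq_concat hθ'.symm
    rw [spineL_length] at hlen
    omega
  · obtain ⟨hsp, hq⟩ := app_singl_inj hθ'
    have hl := congrArg List.length hsp
    simp [spineL_length] at hl
    omega
  · obtain ⟨hsp, _⟩ := app_singl_inj hθ'
    exact hnsp ⟨φs.length, le_rfl, hsp.symm⟩

private lemma succs_dev {ρ θ : List Q} (hWM : WM S ρ θ) (hdev : DevData S ρ θ) :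
    succs (Wset S) θ = S.fR ρ θ := by
  ext q
  constructor
  · rintro ⟨ρ', hρ'⟩
    rcases hρ'.cases_eq with ⟨i', h1', h2', hρ'', hθ''⟩ |
      ⟨j, y, h1', h2', hy, hρ'', hθ''⟩ | ⟨ρ₀, θ₀, y', hWM', hnsp', hy', hρ'', hθ''⟩
    · exfalso
      obtain ⟨hlen', hθeq, _⟩ := spineL_eq_concat hθ''.symm
      exact hdev.not_spine ⟨θ.length, by omega, hθeq⟩
    · exfalso
      obtain ⟨hsp, _⟩ := app_singl_inj hθ''
      exact hdev.not_spine ⟨j, le_of_lt h2', hsp⟩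
    · obtain ⟨hθθ, hqq⟩ := app_singl_inj hθ''
      subst hqq
      have hWMθ : WM S ρ₀ θ := by rw [hθθ]; exact hWM'
      have hρρ : ρ₀ = ρ := WM.unique hWMθ hWM
      rw [← hρρ, hθθ]
      exact hy'
  · intro hq
    exact ⟨_, WM.fwd ρ θ q hWM hdev.not_spine hq⟩

private lemma Wset_run [Finite Q] (hV : IsPartialRun A w V) (hφs : φs ∈ V)
    (hne : A.NoEmpty) : IsPartialRun A w (Wset S) := by
  refine ⟨Wset_tree hV hφs hne, Wset_finite hV hφs hne, ?_⟩
  rintro π ⟨ρ, hρ⟩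
  obtain ⟨hlen, hρV, hρne, hdis⟩ := hρ.shape hV hφs hne
  rcases hdis with ⟨i, h1, h2, rfl, rfl⟩ | hdev
  · rcases eq_or_lt_of_le h2 with rfl | hlt
    · exact Or.inl (succs_spine_top hV hφs hne)
    · refine Or.inr ?_
      rw [succs_spine_lt h1 hlt, spineL_length, lastSt_spineL A S.σf h1]
      exact S.htrans i h1 hlt
  · rw [succs_dev hρ hdev]
    have hFlink : F (lastSt A ρ) (lastSt A π) := by
      obtain ⟨_, _, _, _, _, _, _, _, _, _, _, _, hl⟩ := hdev
      exact hl
    rcases hV.step ρ hρV with hemp | hδ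
    · refine Or.inl (S.hfR0 ρ π ?_)
      rintro ⟨hc, -⟩
      rw [hemp] at hc
      exact hne _ _ hc
    · refine Or.inr ?_
      have := (S.hfR ρ π hδ hFlink).1
      rwa [hlen] at this

private lemma branch_W_iff [Finite Q] (hV : IsPartialRun A w V) (hφs : φs ∈ V)
    (hne : A.NoEmpty) {θ : List Q} :
    IsBranch (Wset S) θ ↔ θ = spineL S.σf φs.length ∨
      ∃ ρ, WM S ρ θ ∧ DevData S ρ θ ∧ IsBranch V ρ := by
  constructor
  · rintro ⟨⟨ρ, hρ⟩, hsucc⟩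
    obtain ⟨hlen, hρV, hρne, hdis⟩ := hρ.shape hV hφs hne
    rcases hdis with ⟨i, h1, h2, rfl, rfl⟩ | hdev
    · rcases eq_or_lt_of_le h2 with rfl | hlt
      · exact Or.inl rfl
      · exfalso
        rw [succs_spine_lt h1 hlt] at hsucc
        have : S.σf i ∈ (∅ : Set Q) := hsucc ▸ Set.mem_insert _ _
        exact this
    · refine Or.inr ⟨ρ, hρ, hdev, hρV, ?_⟩
      rw [succs_dev hρ hdev] at hsucc
      by_contra hc
      have hδ : succs V ρ ∈ A.δ (lastSt A ρ) (w (ρ.length - 1)) := by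
        rcases hV.step ρ hρV with hemp | hδ
        · exact absurd hemp hc
        · exact hδ
      have hFlink : F (lastSt A ρ) (lastSt A θ) := by
        obtain ⟨_, _, _, _, _, _, _, _, _, _, _, _, hl⟩ := hdev
        exact hl
      have := (S.hfR ρ θ hδ hFlink).1
      rw [hsucc] at this
      exact hne _ _ this
  · rintro (rfl | ⟨ρ, hρ, hdev, hρbr⟩)
    · exact ⟨spine_mem_Wset (List.length_pos_iff.mpr (mem_ne_nil hV.tree hφs)) le_rfl,
        succs_spine_top hV hφs hne⟩
    · refine ⟨⟨ρ, hρ⟩, ?_⟩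
      rw [succs_dev hρ hdev]
      refine S.hfR0 ρ θ ?_
      rintro ⟨hc, -⟩
      rw [hρbr.2] at hc
      exact hne _ _ hc

end Stmt12WTree2


section Stmt12Chain

variable {σ Q : Type*}

private lemma dev_unique {sp u v : List Q} {a b : ℕ} (ha : a ≤ sp.length)
    (hb : b ≤ sp.length) (h : sp.take a ++ u = sp.take b ++ v)
    (hu : u.head? ≠ sp[a]?) (hv : v.head? ≠ sp[b]?) : a = b ∧ u = v := by
  have key : ∀ {a b : ℕ} {u v : List Q}, a ≤ b → b ≤ sp.length →
      sp.take a ++ u = sp.take b ++ v → u.head? ≠ sp[a]? → a = b ∧ u = v := by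
    intro a b u v hab hb h hu
    rcases eq_or_lt_of_le hab with rfl | hlt
    · exact ⟨rfl, List.append_cancel_left h⟩
    · exfalso
      have hsplit : sp.take b = sp.take a ++ (sp.drop a).take (b - a) := by
        rw [← List.take_add]
        congr 1
        omega
      rw [hsplit, List.append_assoc] at h
      have huv := List.append_cancel_left h
      have hmne : (sp.drop a).take (b - a) ≠ [] := by
        intro hc
        have := congrArg List.length hc
        rw [List.length_take, List.length_drop] at this
        simp only [List.length_nil] at this
        omega
      have hm : ((sp.drop a).take (b - a)).head? = sp[a]? := by
        rw [List.head?_take, if_neg (by omega), List.head?_drop]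
      rw [huv, head?_append_left _ hmne, hm] at hu
      exact hu rfl
  rcases le_total a b with hab | hba
  · exact key hab hb h hu
  · obtain ⟨h1, h2⟩ := key hba ha h.symm hv
    exact ⟨h1.symm, h2.symm⟩

private lemma bw_chain {A : ABA σ Q} {w : ℕ → σ} {F B : Q → Q → Prop}
    (hB : BackwardSim A F B) {V : Set (List Q)} (hV : IsPartialRun A w V)
    {φs : List Q} (hφs : φs ∈ V) {s : Q} (hs : B (lastSt A φs) s) :
    ∃ (σf : ℕ → Q) (Rf : ℕ → Set Q),
      σf (φs.length - 1) = s ∧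
      (∀ i, i < φs.length → B (φs.getD i A.ι) (σf i)) ∧
      (∀ j, 1 ≤ j → j < φs.length →
        σf j ∉ Rf j ∧ insert (σf j) (Rf j) ∈ A.δ (σf (j - 1)) (w (j - 1)) ∧
        ∀ y ∈ Rf j, ∃ x, x ∈ succs V (φs.take j) ∧ x ≠ φs.getD j A.ι ∧ F x y) := by
  have hn1 : 1 ≤ φs.length := List.length_pos_iff.mpr (mem_ne_nil hV.tree hφs)
  set n := φs.length with hn
  have hlast : lastSt A φs = φs.getD (n - 1) A.ι := by
    have h := lastSt_take A (l := φs) (i := n) hn1 le_rfl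
    rwa [List.take_length] at h
  suffices h : ∀ k, k ≤ n - 1 → ∃ (σf : ℕ → Q) (Rf : ℕ → Set Q),
      σf (n - 1) = s ∧
      (∀ i, n - 1 - k ≤ i → i < n → B (φs.getD i A.ι) (σf i)) ∧
      (∀ j, n - 1 - k < j → j < n →
        σf j ∉ Rf j ∧ insert (σf j) (Rf j) ∈ A.δ (σf (j - 1)) (w (j - 1)) ∧
        ∀ y ∈ Rf j, ∃ x, x ∈ succs V (φs.take j) ∧ x ≠ φs.getD j A.ι ∧ F x y) by
    obtain ⟨σf, Rf, h1, h2, h3⟩ := h (n - 1) le_rfl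
    exact ⟨σf, Rf, h1, fun i hi => h2 i (by omega) hi,
      fun j hj1 hj2 => h3 j (by omega) hj2⟩
  intro k
  induction k with
  | zero =>
    intro _
    refine ⟨fun _ => s, fun _ => ∅, rfl, ?_, ?_⟩
    · intro i hi1 hi2
      have : i = n - 1 := by omega
      subst this
      rwa [hlast] at hs
    · intro j hj1 hj2
      omega
  | succ k ih =>
    intro hk
    obtain ⟨σf, Rf, h1, h2, h3⟩ := ih (by omega)
    set i₀ := n - 1 - (k + 1) with hi₀
    have hBi : B (φs.getD (i₀ + 1) A.ι) (σf (i₀ + 1)) := h2 _ (by omega) (by omega)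
    have hmem1 : φs.take (i₀ + 1) ∈ V := tree_take_mem hV.tree hφs (by omega)
    have hmem2 : φs.take (i₀ + 2) ∈ V := tree_take_mem hV.tree hφs (by omega)
    have hsucc : φs.getD (i₀ + 1) A.ι ∈ succs V (φs.take (i₀ + 1)) := by
      have heq : φs.take (i₀ + 2) = φs.take (i₀ + 1) ++ [φs.getD (i₀ + 1) A.ι] :=
        take_succ_getD φs (by omega) A.ι
      rw [heq] at hmem2
      exact hmem2
    have hδ : succs V (φs.take (i₀ + 1)) ∈ A.δ (φs.getD i₀ A.ι) (w i₀) := by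
      rcases hV.step _ hmem1 with hemp | hδ
      · rw [hemp] at hsucc
        exact absurd hsucc (by simp)
      · have hl : lastSt A (φs.take (i₀ + 1)) = φs.getD i₀ A.ι := by
          have h := lastSt_take A (l := φs) (i := i₀ + 1) (by omega) (by omega)
          simpa using h
        have hlen : (φs.take (i₀ + 1)).length = i₀ + 1 := by
          rw [List.length_take]
          omega
        rw [hl, hlen] at hδ
        simpa using hδ
    obtain ⟨-, -, hbw⟩ := hB _ _ hBi
    have hnotin : φs.getD (i₀ + 1) A.ι ∉
        succs V (φs.take (i₀ + 1)) \ {φs.getD (i₀ + 1) A.ι} := by simp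
    have hins : insert (φs.getD (i₀ + 1) A.ι)
        (succs V (φs.take (i₀ + 1)) \ {φs.getD (i₀ + 1) A.ι}) =
        succs V (φs.take (i₀ + 1)) := by
      rw [Set.insert_diff_singleton]
      exact Set.insert_eq_self.mpr hsucc
    obtain ⟨s', R', hs'R, hinsδ, hBq, hcov⟩ :=
      hbw (w i₀) (φs.getD i₀ A.ι) _ hnotin (by rw [hins]; exact hδ)
    refine ⟨fun i => if i = i₀ then s' else σf i,
      fun j => if j = i₀ + 1 then R' else Rf j, ?_, ?_, ?_⟩
    · simp only []
      rw [if_neg (by omega)]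
      exact h1
    · intro i hi1 hi2
      simp only []
      rcases eq_or_lt_of_le hi1 with heq | hlt
      · rw [if_pos heq.symm, ← heq]
        exact hBq
      · rw [if_neg (by omega)]
        exact h2 i (by omega) hi2
    · intro j hj1 hj2
      simp only []
      rcases eq_or_lt_of_le (by omega : i₀ + 1 ≤ j) with heq | hlt
      · subst heq
        rw [if_pos rfl, if_neg (by omega), if_pos (by omega)]
        refine ⟨hs'R, by simpa using hinsδ, ?_⟩
        intro y hy
        obtain ⟨x, hx, hFxy⟩ := hcov y hy
        exact ⟨x, hx.1, by simpa using hx.2, hFxy⟩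
      · rw [if_neg (by omega), if_neg (by omega), if_neg (by omega)]
        exact h3 j (by omega) hj2

end Stmt12Chain


section Stmt12SurgMain

variable {σ Q : Type*}

private lemma αle_trans (A : ABA σ Q) : ∀ a b c, αle A a b → αle A b c → αle A a c :=
  fun _ _ _ h1 h2 ha => h2 (h1 ha)

private lemma surgery [Finite Q] {A : ABA σ Q} {w : ℕ → σ} {F B M : Q → Q → Prop}
    (hne : A.NoEmpty) (hFt : Transitive F) (hF : ForwardSim A F)
    (hBt : Transitive B) (hB : BackwardSim A F B) (hM : IsMediated F B M)
    {T : Set (List Q)} {ext : List Q → Q}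
    {V : Set (List Q)} (hV : IsPartialRun A w V)
    (hwext : TrWExt A M B ext T V)
    {φs : List Q} (hφbr : IsBranch V φs)
    (hφstr : ¬ ∃ π, IsBranch T π ∧ BrExt A F ext π φs) :
    ∃ (W : Set (List Q)) (sp : List Q),
      IsPartialRun A w W ∧ TrWExt A M B ext T W ∧
      (∀ p r, [p] ∈ V → [r] ∈ W → B p r) ∧
      sp ∈ W ∧ sp.length = φs.length ∧ sp ∉ swT A F ext T W ∧
      ∀ θ, IsBranch (swT A F ext T W) θ →
        ∃ j u v, 1 ≤ j ∧ j < φs.length ∧ θ = sp.take j ++ v ∧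
          v ≠ [] ∧ v.head? ≠ sp[j]? ∧ List.Forall₂ F u v ∧ u ≠ [] ∧
          u.head? ≠ φs[j]? ∧ IsBranch (swT A F ext T V) (φs.take j ++ u) := by
  obtain ⟨πs, hπb, hπα, hπM⟩ := hwext.1 φs hφbr
  obtain ⟨s, hsF, hsB⟩ := hM.mediator _ _ hπM
  obtain ⟨σf, Rf, hσs, hBc', hchain⟩ := bw_chain hB hV hφbr.1 hsB
  have hn1 : 1 ≤ φs.length := List.length_pos_iff.mpr (mem_ne_nil hV.tree hφbr.1)
  -- choice functions
  have hsxex : ∀ j y, ∃ x, 1 ≤ j → j < φs.length → y ∈ Rf j →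
      x ∈ succs V (φs.take j) ∧ x ≠ φs.getD j A.ι ∧ F x y := by
    intro j y
    by_cases h : 1 ≤ j ∧ j < φs.length ∧ y ∈ Rf j
    · obtain ⟨x, hx⟩ := (hchain j h.1 h.2.1).2.2 y h.2.2
      exact ⟨x, fun _ _ _ => ⟨hx.1, hx.2.1, hx.2.2⟩⟩
    · exact ⟨A.ι, fun h1 h2 h3 => absurd ⟨h1, h2, h3⟩ h⟩
  choose sx hsx using hsxex
  have hfRex : ∀ ρ θ : List Q, ∃ R : Set Q,
      (succs V ρ ∈ A.δ (lastSt A ρ) (w (ρ.length - 1)) →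
        F (lastSt A ρ) (lastSt A θ) →
        R ∈ A.δ (lastSt A θ) (w (ρ.length - 1)) ∧ ∀ y' ∈ R, ∃ x ∈ succs V ρ, F x y') ∧
      (¬ (succs V ρ ∈ A.δ (lastSt A ρ) (w (ρ.length - 1)) ∧
        F (lastSt A ρ) (lastSt A θ)) → R = ∅) := by
    intro ρ θ
    by_cases h : succs V ρ ∈ A.δ (lastSt A ρ) (w (ρ.length - 1)) ∧
        F (lastSt A ρ) (lastSt A θ)
    · obtain ⟨R, hR, hcov⟩ := (hF _ _ h.2).2 _ _ h.1
      exact ⟨R, fun _ _ => ⟨hR, hcov⟩, fun hc => absurd h hc⟩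
    · exact ⟨∅, fun h1 h2 => absurd ⟨h1, h2⟩ h, fun _ => rfl⟩
  choose fR hfR1 hfR2 using hfRex
  have hfxex : ∀ ρ θ y', ∃ x, succs V ρ ∈ A.δ (lastSt A ρ) (w (ρ.length - 1)) →
      F (lastSt A ρ) (lastSt A θ) → y' ∈ fR ρ θ → x ∈ succs V ρ ∧ F x y' := by
    intro ρ θ y'
    by_cases h : succs V ρ ∈ A.δ (lastSt A ρ) (w (ρ.length - 1)) ∧
        F (lastSt A ρ) (lastSt A θ) ∧ y' ∈ fR ρ θ
    · obtain ⟨x, hx1, hx2⟩ := (hfR1 ρ θ h.1 h.2.1).2 y' h.2.2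
      exact ⟨x, fun _ _ _ => ⟨hx1, hx2⟩⟩
    · exact ⟨A.ι, fun h1 h2 h3 => absurd ⟨h1, h2, h3⟩ h⟩
  choose fx hfx using hfxex
  let S : Surg A w F B V φs :=
    { σf := σf, Rf := Rf, sx := sx, fR := fR, fx := fx,
      hBc := hBc',
      hnotmem := fun j h1 h2 => (hchain j h1 h2).1,
      htrans := fun j h1 h2 => (hchain j h1 h2).2.1,
      hside := fun j y h1 h2 hy => hsx j y h1 h2 hy,
      hfR := fun ρ θ hδ hFl =>
        ⟨(hfR1 ρ θ hδ hFl).1, fun y' hy' => hfx ρ θ y' hδ hFl hy'⟩,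
      hfR0 := fun ρ θ hc => hfR2 ρ θ hc }
  have hrun : IsPartialRun A w (Wset S) := Wset_run hV hφbr.1 hne
  have htree : IsTree (Wset S) := hrun.tree
  set sp := spineL S.σf φs.length with hsp
  have hsplen : sp.length = φs.length := spineL_length _ _
  -- pointwise αle between φs and sp
  have hαφsp : List.Forall₂ (αle A) φs sp := by
    rw [List.forall₂_iff_get]
    refine ⟨hsplen.symm, ?_⟩
    intro i h1 h2
    have hget : sp.get ⟨i, h2⟩ = σf i := by
      simp [hsp, spineL]
      rfl
    have hget2 : φs.get ⟨i, h1⟩ = φs.getD i A.ι := by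
      rw [List.getD_eq_getElem φs A.ι h1]
      rfl
    rw [hget, hget2]
    exact (hB _ _ (hBc' i h1)).2.1
  have hlastsp : lastSt A sp = s := by
    rw [hsp, lastSt_spineL A _ hn1]
    exact hσs
  have hspStrong : BrExt A F ext πs sp :=
    ⟨forall₂_comp (αle_trans A) hπα hαφsp, by rw [hlastsp]; exact hsF⟩
  -- pointwise relations for deviating nodes
  have hαdev : ∀ {ρ θ : List Q}, DevData S ρ θ → List.Forall₂ (αle A) ρ θ := by
    rintro ρ θ ⟨j, u, v, h1, h2, hρeq, hθeq, hune, hvne, hF2, hvy, hux, hFl⟩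
    rw [hρeq, hθeq]
    refine List.rel_append ?_ (hF2.imp fun a b hab => (hF _ _ hab).1)
    rw [List.forall₂_iff_get]
    refine ⟨by simp [spineL_length, List.length_take]; omega, ?_⟩
    intro i hi1 hi2
    have hij : i < j := by
      have := hi1
      rw [List.length_take] at this
      omega
    have hin : i < φs.length := by omega
    have hg1 : (φs.take j).get ⟨i, hi1⟩ = φs.getD i A.ι := by
      have : (φs.take j).get ⟨i, hi1⟩ = φs[i] := List.getElem_take
      rw [this, List.getD_eq_getElem φs A.ι hin]
    have hg2 : (spineL S.σf j).get ⟨i, hi2⟩ = σf i := by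
      simp [spineL]
      rfl
    rw [hg1, hg2]
    exact (hB _ _ (hBc' i hin)).2.1
  have hFdev : ∀ {ρ θ : List Q}, DevData S ρ θ → F (lastSt A ρ) (lastSt A θ) := by
    rintro ρ θ ⟨j, u, v, h1, h2, hρeq, hθeq, hune, hvne, hF2, hvy, hux, hFl⟩
    exact hFl
  -- strictness transfer
  have hstrict_tr : ∀ {ρ θ : List Q}, DevData S ρ θ →
      (¬ ∃ π, IsBranch T π ∧ BrExt A F ext π θ) →
      ¬ ∃ π, IsBranch T π ∧ BrExt A F ext π ρ := by
    rintro ρ θ hdev hθstr ⟨π₀, hπ₀b, hπ₀α, hπ₀F⟩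
    exact hθstr ⟨π₀, hπ₀b, forall₂_comp (αle_trans A) hπ₀α (hαdev hdev),
      hFt hπ₀F (hFdev hdev)⟩
  -- the root of W
  have hrootW : [σf 0] ∈ Wset S := by
    have h := spine_mem_Wset (S := S) le_rfl hn1
    rwa [spineL_one] at h
  have hrootV : [φs.getD 0 A.ι] ∈ V := by
    have heq : φs.take 1 = [φs.getD 0 A.ι] := by
      have := take_succ_getD φs (by omega : 0 < φs.length) A.ι
      simpa using this
    rw [← heq]
    exact tree_take_mem hV.tree hφbr.1 le_rfl
  have hBroot : ∀ p r, [p] ∈ V → [r] ∈ Wset S → B p r := by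
    intro p r hp hr
    obtain ⟨q₀, hq₀, hq₀u⟩ := htree.root
    obtain ⟨p₀, hp₀, hp₀u⟩ := hV.tree.root
    have hr0 : r = σf 0 := by rw [hq₀u r hr, hq₀u _ hrootW]
    have hp0 : p = φs.getD 0 A.ι := by rw [hp₀u p hp, hp₀u _ hrootV]
    rw [hr0, hp0]
    exact hBc' 0 hn1
  refine ⟨Wset S, sp, hrun, ?_, hBroot, spine_mem_Wset hn1 le_rfl, hsplen, ?_, ?_⟩
  · -- TrWExt
    constructor
    · intro ψ hψ
      rcases (branch_W_iff hV hφbr.1 hne).mp hψ with rfl | ⟨ρ, hWMρ, hdev, hρbr⟩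
      · exact ⟨πs, hπb, hspStrong.1, hM.le_f _ _ hspStrong.2⟩
      · obtain ⟨π₀, hπ₀b, hπ₀α, hπ₀M⟩ := hwext.1 ρ hρbr
        exact ⟨π₀, hπ₀b, forall₂_comp (αle_trans A) hπ₀α (hαdev hdev),
          hM.fwd_ext _ _ _ hπ₀M (hFdev hdev)⟩
    · intro p r hp hr
      obtain ⟨p₀, hp₀, hp₀u⟩ := hV.tree.root
      have : p = φs.getD 0 A.ι → B p r := fun h =>
        hBroot _ _ (h ▸ hrootV) hr
      exact hBt (hwext.2 p (φs.getD 0 A.ι) hp hrootV) (hBroot _ _ hrootV hr)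
  · -- sp ∉ swT
    rintro ⟨-, ψ, hψbr, hψstr, hpre⟩
    rcases (branch_W_iff hV hφbr.1 hne).mp hψbr with rfl | ⟨ρ, hWMρ, hdev, hρbr⟩
    · exact hψstr ⟨πs, hπb, hspStrong⟩
    · obtain ⟨j, u, v, h1, h2, hρeq, hθeq, hune, hvne, hF2, ⟨y, hy, hvh⟩, hux, hFl⟩ := hdev
      have hjn : j < sp.length := by omega
      have hψj : ψ[j]? = some y := by
        rw [hθeq]
        have h := getElem?_append_head (spineL S.σf j) v
        rw [spineL_length] at h
        rw [h, hvh]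
      have hspj : sp[j]? = some (σf j) := spineL_getElem? _ (by omega)
      have hpre' : sp[j]? = ψ[j]? := by
        obtain ⟨t, rfl⟩ := hpre
        rw [List.getElem?_append_left hjn]
      rw [hspj, hψj] at hpre'
      have : σf j ∈ Rf j := by
        rw [Option.some_injective _ hpre']
        exact hy
      exact (hchain j h1 h2).1 this
  · -- interface for strict branches of W
    intro θ hθsw
    obtain ⟨hθbr, hθstr⟩ := (branch_swT_iff A F ext htree).mp hθsw
    rcases (branch_W_iff hV hφbr.1 hne).mp hθbr with rfl | ⟨ρ, hWMρ, hdev, hρbr⟩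
    · exact absurd ⟨πs, hπb, hspStrong⟩ hθstr
    · have hdev' := hdev
      obtain ⟨j, u, v, h1, h2, hρeq, hθeq, hune, hvne, hF2, ⟨y, hy, hvh⟩,
        ⟨x, huh, hxm, hxne⟩, hFl⟩ := hdev'
      refine ⟨j, u, v, h1, h2, ?_, hvne, ?_, hF2, hune, ?_, ?_⟩
      · rw [hθeq, hsp, spineL_take, min_eq_left (le_of_lt h2)]
      · rw [hvh, hsp, spineL_getElem? _ h2]
        intro hc
        have : y = σf j := Option.some_injective _ hc
        exact (hchain j h1 h2).1 (this ▸ hy)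
      · rw [huh, List.getElem?_eq_getElem h2]
        intro hc
        have : x = φs[j] := Option.some_injective _ hc
        rw [List.getD_eq_getElem φs A.ι h2] at hxne
        exact hxne this
      · rw [branch_swT_iff A F ext hV.tree]
        refine ⟨hρeq ▸ hρbr, ?_⟩
        have := hstrict_tr hdev hθstr
        rw [hρeq] at this
        exact this

end Stmt12SurgMain


section Stmt12Progress

variable {σ Q : Type*}

private lemma forall₂_refl' {F : Q → Q → Prop} (hFr : Reflexive F) (l : List Q) :
    List.Forall₂ F l l := List.forall₂_same.mpr fun x _ => hFr x

private lemma forall₂_head {F : Q → Q → Prop} {l₁ l₂ : List Q} (h : List.Forall₂ F l₁ l₂)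
    {a b : Q} (h1 : l₁.head? = some a) (h2 : l₂.head? = some b) : F a b := by
  cases h with
  | nil => simp at h1
  | cons hab _ =>
    simp only [List.head?_cons, Option.some.injEq] at h1 h2
    rw [← h1, ← h2]
    exact hab

private lemma exists_minimal {α : Type*} {r : α → α → Prop} (hrefl : ∀ a, r a a)
    (htr : ∀ a b c, r a b → r b c → r a c) {s : Set α} (hfin : s.Finite) :
    s.Nonempty → ∃ m ∈ s, ∀ x ∈ s, r x m → r m x := by
  refine Set.Finite.induction_on (motive := fun s _ => s.Nonempty → ∃ m ∈ s, ∀ x ∈ s, r x m → r m x)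
    s hfin ?_ ?_
  · rintro ⟨x, hx⟩
    exact absurd hx (Set.notMem_empty x)
  · intro a s' ha hsfin ih
    intro _
    by_cases hs : s'.Nonempty
    · obtain ⟨m, hm, hmin⟩ := ih hs
      by_cases hr : r a m → r m a
      · refine ⟨m, Set.mem_insert_of_mem _ hm, ?_⟩
        intro x hx
        rcases Set.mem_insert_iff.mp hx with rfl | hx'
        · exact hr
        · exact hmin x hx'
      · push_neg at hr
        refine ⟨a, Set.mem_insert _ _, ?_⟩
        intro x hx hxa
        rcases Set.mem_insert_iff.mp hx with rfl | hx'
        · exact hrefl x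
        · exact absurd (htr _ _ _ (hmin x hx' (htr _ _ _ hxa hr.1)) hxa) hr.2
    · rw [Set.not_nonempty_iff_eq_empty.mp hs]
      refine ⟨a, Set.mem_insert _ _, ?_⟩
      intro x hx
      rcases Set.mem_insert_iff.mp hx with rfl | hx'
      · exact fun _ => hrefl x
      · simp at hx'

private lemma seqOf_length {X : Set (List Q)} {t : List Q} (h : t ≠ []) :
    (seqOf X t).length = t.length := by
  cases t with
  | nil => simp at h
  | cons a t => simp [seqOf]

private lemma seqOf_getD {X : Set (List Q)} {t : List Q} (h : t ≠ []) {j : ℕ}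
    (hj : j < t.length) : (seqOf X t).getD j ∅ = ominus X t (j + 1) := by
  cases t with
  | nil => simp at h
  | cons a t =>
    show ((List.range (a :: t).length).map fun i => ominus X (a :: t) (i + 1)).getD j ∅ = _
    rw [List.getD_eq_getElem?_getD, List.getElem?_map, List.getElem?_range hj]
    rfl

private lemma progress [Finite Q] {A : ABA σ Q} {w : ℕ → σ} {F B M : Q → Q → Prop}
    (hne : A.NoEmpty) (hFr : Reflexive F) (hFt : Transitive F) (hF : ForwardSim A F)
    (hunamb : Unambiguous A F) (hBt : Transitive B) (hB : BackwardSim A F B)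
    (hM : IsMediated F B M) {T : Set (List Q)} {ext : List Q → Q}
    {V : Set (List Q)} (hV : IsPartialRun A w V) (hwext : TrWExt A M B ext T V)
    {τ : List Q} (hτ : τ ∈ V) (hτb : ¬ IsBranch (swT A F ext T V) τ)
    (hXne : (swT A F ext T V).Nonempty) :
    ∃ (W : Set (List Q)) (τW : List Q), IsPartialRun A w W ∧ TrWExt A M B ext T W ∧
      (∀ p r, [p] ∈ V → [r] ∈ W → B p r) ∧
      τW ∈ W ∧ τW ≠ [] ∧ ¬ IsBranch (swT A F ext T W) τW ∧
      SeqLt F (seqOf (swT A F ext T V) τ) (seqOf (swT A F ext T W) τW) := by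
  classical
  set X := swT A F ext T V with hX
  have hXV : X ⊆ V := by
    rintro ρ ⟨hne', ψ, hψb, hψs, hpre⟩
    exact hV.tree.prefix_closed ψ hψb.1 ρ hpre hne'
  have hτne : τ ≠ [] := mem_ne_nil hV.tree hτ
  -- exact share function
  set cf : List Q → ℕ :=
    fun φ => Nat.findGreatest (fun j => φ.take j = τ.take j) (min φ.length τ.length)
    with hcf
  have hbr_facts : ∀ φ, IsBranch X φ →
      1 ≤ cf φ ∧ cf φ < φ.length ∧ cf φ ≤ τ.length ∧
      φ.take (cf φ) = τ.take (cf φ) ∧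
      (cf φ < τ.length → φ[cf φ]? ≠ τ[cf φ]?) := by
    intro φ hφ
    obtain ⟨hφV, hφstr⟩ := (branch_swT_iff A F ext hV.tree).mp hφ
    have hφne : φ ≠ [] := mem_ne_nil hV.tree hφV.1
    have hmin1 : 1 ≤ min φ.length τ.length :=
      le_min (List.length_pos_iff.mpr hφne) (List.length_pos_iff.mpr hτne)
    have hP1 : φ.take 1 = τ.take 1 := by
      obtain ⟨p₀, hp₀, hp₀u⟩ := hV.tree.root
      rw [tree_take_one hV.tree hφV.1 hp₀, tree_take_one hV.tree hτ hp₀]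
    have hc1 : 1 ≤ cf φ := by
      simp only [hcf]
      exact Nat.le_findGreatest hmin1 hP1
    have hcspec : φ.take (cf φ) = τ.take (cf φ) := by
      simp only [hcf]
      exact Nat.findGreatest_spec (P := fun j => φ.take j = τ.take j) hmin1 hP1
    have hcle : cf φ ≤ min φ.length τ.length := by
      simp only [hcf]
      exact Nat.findGreatest_le _
    have hcφlen : cf φ < φ.length := by
      rcases eq_or_lt_of_le (le_trans hcle (min_le_left _ _)) with heq | hlt
      · exfalso
        have hφτ : φ.length ≤ τ.length := by
          have h := hcle
          rw [heq] at h
          exact (le_min_iff.mp h).2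
        have hφpre : φ = τ.take φ.length := by
          have h := hcspec
          rw [heq, List.take_length] at h
          exact h
        rcases eq_or_lt_of_le hφτ with heq2 | hlt2
        · apply hτb
          have hφτeq : φ = τ := by rw [hφpre, heq2, List.take_length]
          exact hφτeq ▸ hφ
        · have hmem : τ.take (φ.length + 1) ∈ V := tree_take_mem hV.tree hτ (by omega)
          have heq3 : τ.take (φ.length + 1) = φ ++ [τ.getD φ.length A.ι] := by
            rw [take_succ_getD τ hlt2 A.ι, ← hφpre]
          rw [heq3] at hmem
          have hsucc : τ.getD φ.length A.ι ∈ succs V φ := hmem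
          rw [hφV.2] at hsucc
          exact hsucc
      · exact hlt
    refine ⟨hc1, hcφlen, le_trans hcle (min_le_right _ _), hcspec, ?_⟩
    intro hcτ hceq
    have hP : φ.take (cf φ + 1) = τ.take (cf φ + 1) := by
      rw [take_succ_getD φ hcφlen A.ι, take_succ_getD τ hcτ A.ι, hcspec]
      congr 1
      rw [List.getD_eq_getElem φ A.ι hcφlen, List.getD_eq_getElem τ A.ι hcτ]
      rw [List.getElem?_eq_getElem hcφlen, List.getElem?_eq_getElem hcτ] at hceq
      exact congrArg (fun z => [z]) (Option.some_injective _ hceq)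
    have hgr : ¬ (fun j => φ.take j = τ.take j) (cf φ + 1) := by
      have h1 : cf φ < cf φ + 1 := Nat.lt_succ_self _
      have h2 : cf φ + 1 ≤ min φ.length τ.length := le_min (by omega) (by omega)
      simp only [hcf] at h1 ⊢
      exact Nat.findGreatest_is_greatest h1 h2
    exact hgr hP
  -- maximal share
  have hStrFin : {φ | IsBranch X φ}.Finite :=
    (hV.finite.subset hXV).subset fun φ h => h.1
  have hStrne : {φ | IsBranch X φ}.Nonempty := by
    obtain ⟨ρ, hρ⟩ := hXne
    obtain ⟨hne', ψ, hψb, hψs, hpre⟩ := hρ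
    exact ⟨ψ, (branch_swT_iff A F ext hV.tree).mpr ⟨hψb, hψs⟩⟩
  obtain ⟨φm, hφm, hφmax⟩ := Set.Finite.exists_maximalFor cf _ hStrFin hStrne
  set c := cf φm with hc
  have hcmax : ∀ φ', IsBranch X φ' → cf φ' ≤ c := by
    intro φ' h'
    by_contra hlt
    push_neg at hlt
    have := hφmax h' (le_of_lt hlt)
    omega
  -- minimal suffix among maximal-share strict branches
  set Cs : Set (List Q) := {u | ∃ φ, IsBranch X φ ∧ cf φ = c ∧ u = φ.drop c} with hCsdef
  have hCsfin : Cs.Finite := by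
    have hsub : Cs ⊆ (fun φ => φ.drop c) '' {φ | IsBranch X φ} := by
      rintro u ⟨φ, h1, h2, rfl⟩
      exact ⟨φ, h1, rfl⟩
    exact (hStrFin.image _).subset hsub
  have hCsne : Cs.Nonempty := ⟨φm.drop c, φm, hφm, rfl, rfl⟩
  obtain ⟨χs, hχsCs, hχmin⟩ := exists_minimal (forall₂_refl' hFr)
    (fun a b c' hab hbc => forall₂_comp (r₁ := F) (r₂ := F) (r₃ := F) (fun _ _ _ h1 h2 => hFt h1 h2) hab hbc) hCsfin hCsne
  obtain ⟨φstar, hφsbr, hφsc, hχeq⟩ := hχsCs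
  obtain ⟨hc1, hclen, hcτle, htakeq, hhd⟩ := hbr_facts φstar hφsbr
  rw [hφsc] at hc1 hclen hcτle htakeq hhd
  obtain ⟨hφsV, hφsstr⟩ := (branch_swT_iff A F ext hV.tree).mp hφsbr
  -- surgery
  obtain ⟨W, sp, hWrun, hWwext, hWroot, hspW, hsplen, hspnot, hS1⟩ :=
    surgery hne hFt hF hBt hB hM hV hwext hφsV hφsstr
  have hφsne : φstar ≠ [] := mem_ne_nil hV.tree hφsV.1
  have hspne : sp ≠ [] := by
    intro hcn
    have hl := congrArg List.length hcn
    rw [hsplen] at hl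
    simp only [List.length_nil] at hl
    exact hφsne (List.length_eq_zero_iff.mp hl)
  -- key decomposition of strict W-deviations
  have key : ∀ i, 1 ≤ i → i ≤ c → ∀ χ' ∈ ominus (swT A F ext T W) sp i,
      ∃ u, List.Forall₂ F u χ' ∧ u ≠ [] ∧ u.head? ≠ φstar[i]? ∧
        IsBranch X (φstar.take i ++ u) ∧ u ∈ ominus X τ i := by
    intro i hi1 hic χ' hχ'
    obtain ⟨hχne, hχhd, hχmem, hχsucc⟩ := hχ'
    have hθbr : IsBranch (swT A F ext T W) (sp.take i ++ χ') := ⟨hχmem, hχsucc⟩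
    obtain ⟨j₁, u, v, hj1, hj2, hθeq, hvne, hvhd, hFuv, hune, huhd, hubr⟩ := hS1 _ hθbr
    have hilen : i ≤ sp.length := by rw [hsplen]; omega
    have hjlen : j₁ ≤ sp.length := by rw [hsplen]; omega
    obtain ⟨hij, huv⟩ := dev_unique hilen hjlen hθeq hχhd hvhd
    subst hij
    subst huv
    have heqti : φstar.take i = τ.take i := by
      have h1 : (φstar.take c).take i = (τ.take c).take i := by rw [htakeq]
      simpa only [List.take_take, min_eq_left hic] using h1
    refine ⟨u, hFuv, hune, huhd, hubr, hune, ?_, ?_, ?_⟩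
    · -- u.head? ≠ τ[i]?
      rcases eq_or_lt_of_le hic with heq | hlt
      · subst heq
        by_cases hcτ' : c < τ.length
        · intro hceq
          have hlen1 : (φstar.take c).length = c := by
            rw [List.length_take]
            omega
          have hP : (φstar.take c ++ u).take (c + 1) = τ.take (c + 1) := by
            have h2 : (φstar.take c ++ u).take (c + 1) = φstar.take c ++ u.take 1 := by
              have h3 : (φstar.take c ++ u).take (c + 1) = (φstar.take c ++ u).take c ++ ((φstar.take c ++ u).drop c).take 1 := List.take_add
              rwa [List.take_left' hlen1, List.drop_left' hlen1] at h3
            rw [h2, List.take_one, hceq, List.getElem?_eq_getElem hcτ',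
              take_succ_getD τ hcτ' A.ι, heqti, List.getD_eq_getElem τ A.ι hcτ']
            rfl
          have hge : c + 1 ≤ cf (φstar.take c ++ u) := by
            simp only [hcf]
            refine Nat.le_findGreatest (le_min ?_ (by omega)) hP
            rw [List.length_append, hlen1]
            have := List.length_pos_iff.mpr hune
            omega
          have hle := hcmax _ hubr
          omega
        · have h0 : τ[c]? = none := by
            rw [List.getElem?_eq_none]
            omega
          rw [h0, List.head?_eq_head hune]
          simp
      · have hφτi : φstar[i]? = τ[i]? := by
          have h1 : (φstar.take c)[i]? = (τ.take c)[i]? := by rw [htakeq]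
          rwa [List.getElem?_take, List.getElem?_take, if_pos hlt, if_pos hlt] at h1
        rw [← hφτi]
        exact huhd
    · rw [← heqti]
      exact hubr.1
    · rw [← heqti]
      exact hubr.2
  -- χs is a witness in the V-component
  have heqφ : τ.take c ++ χs = φstar := by
    rw [hχeq, ← htakeq, List.take_append_drop]
  have hχs_mem : χs ∈ ominus X τ c := by
    have hdropne : χs ≠ [] := by
      rw [hχeq]
      intro hcn
      have hl := congrArg List.length hcn
      rw [List.length_drop] at hl
      simp only [List.length_nil] at hl
      omega
    refine ⟨hdropne, ?_, ?_, ?_⟩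
    · rw [hχeq, List.head?_drop]
      by_cases hcτ' : c < τ.length
      · exact hhd hcτ'
      · have h0 : τ[c]? = none := by
          rw [List.getElem?_eq_none]
          omega
        rw [h0, List.getElem?_eq_getElem hclen]
        simp
    · rw [heqφ]
      exact hφsbr.1
    · rw [heqφ]
      exact hφsbr.2
  refine ⟨W, sp, hWrun, hWwext, hWroot, hspW, hspne, fun hbr => hspnot hbr.1, ?_⟩
  refine ⟨c - 1, ?_, ?_, ?_⟩
  · rw [seqOf_length hτne, seqOf_length hspne, hsplen]
    simp only [lt_min_iff]
    omega
  · have hc1' : c - 1 + 1 = c := by omega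
    rw [seqOf_getD hτne (by omega), seqOf_getD hspne (by rw [hsplen]; omega), hc1']
    constructor
    · intro χ' hχ'
      obtain ⟨u, hF2, _, _, _, humem⟩ := key c hc1 le_rfl χ' hχ'
      exact ⟨u, humem, hF2⟩
    · intro hSLe
      obtain ⟨χ', hχ'mem, hFχ'χs⟩ := hSLe χs hχs_mem
      obtain ⟨u, hFuχ', hune, huhd, hubr, humem⟩ := key c hc1 le_rfl χ' hχ'mem
      have hFuχs : List.Forall₂ F u χs :=
        forall₂_comp (r₁ := F) (r₂ := F) (r₃ := F) (fun _ _ _ h1 h2 => hFt h1 h2) hFuχ' hFχ'χs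
      have hlen1 : (φstar.take c).length = c := by
        rw [List.length_take]
        omega
      have hcfρ : cf (φstar.take c ++ u) = c := by
        have hle := hcmax _ hubr
        have hge : c ≤ cf (φstar.take c ++ u) := by
          simp only [hcf]
          refine Nat.le_findGreatest (le_min ?_ (by omega)) ?_
          · rw [List.length_append, hlen1]
            omega
          · rw [List.take_left' hlen1]
            exact htakeq
        omega
      have huCs : u ∈ Cs := ⟨φstar.take c ++ u, hubr, hcfρ, (List.drop_left' hlen1).symm⟩
      have hFχsu : List.Forall₂ F χs u := hχmin u huCs hFuχs
      have hx : u.head? = some (u.head hune) := List.head?_eq_head hune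
      have hχshd : χs.head? = some φstar[c] := by
        rw [hχeq, List.head?_drop, List.getElem?_eq_getElem hclen]
      have hF1 : F (u.head hune) φstar[c] := forall₂_head hFuχs hx hχshd
      have hF2' : F φstar[c] (u.head hune) := forall₂_head hFχsu hχshd hx
      have hxne : u.head hune ≠ φstar[c] := by
        intro hcn
        apply huhd
        rw [hx, hcn, List.getElem?_eq_getElem hclen]
      have hq_mem : φstar[c] ∈ succs V (φstar.take c) := by
        have h1 : φstar.take (c + 1) ∈ V := tree_take_mem hV.tree hφsV.1 (by omega)
        have h2 : φstar.take (c + 1) = φstar.take c ++ [φstar[c]] := by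
          rw [take_succ_getD φstar hclen A.ι, List.getD_eq_getElem φstar A.ι hclen]
        rw [h2] at h1
        exact h1
      have hx_mem : u.head hune ∈ succs V (φstar.take c) := by
        have hρV : φstar.take c ++ u ∈ V := hXV hubr.1
        have h1 : (φstar.take c ++ u).take (c + 1) ∈ V :=
          tree_take_mem hV.tree hρV (by omega)
        have h2 : (φstar.take c ++ u).take (c + 1) = φstar.take c ++ [u.head hune] := by
          have h3 : (φstar.take c ++ u).take (c + 1) = (φstar.take c ++ u).take c ++ ((φstar.take c ++ u).drop c).take 1 := List.take_add
          rw [List.take_left' hlen1, List.drop_left' hlen1] at h3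
          rw [h3, List.take_one, hx]
          rfl
        rw [h2] at h1
        exact h1
      have hδ : succs V (φstar.take c) ∈
          A.δ (lastSt A (φstar.take c)) (w ((φstar.take c).length - 1)) := by
        rcases hV.step _ (tree_take_mem hV.tree hφsV.1 (by omega : 1 ≤ c)) with hemp | hδ
        · rw [hemp] at hq_mem
          exact absurd hq_mem (by simp)
        · exact hδ
      exact hunamb _ _ _ hδ _ hx_mem _ hq_mem hxne ⟨hF1, hF2'⟩
  · intro j hj
    rw [seqOf_getD hτne (by omega), seqOf_getD hspne (by rw [hsplen]; omega)]
    intro χ' hχ'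
    obtain ⟨u, hF2, _, _, _, humem⟩ := key (j + 1) (by omega) (by omega) χ' hχ'
    exact ⟨u, humem, hF2⟩

end Stmt12Progress


section Stmt12WF

variable {σ Q : Type*}

private lemma SetLe_refl {F : Q → Q → Prop} (hFr : Reflexive F) (P : Set (List Q)) :
    SetLe F P P := fun φ h => ⟨φ, h, forall₂_refl' hFr φ⟩

private lemma SetLe_trans {F : Q → Q → Prop} (hFt : Transitive F)
    {P1 P2 P3 : Set (List Q)} (h12 : SetLe F P1 P2) (h23 : SetLe F P2 P3) :
    SetLe F P1 P3 := by
  intro φ3 h3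
  obtain ⟨φ2, h2, hF23⟩ := h23 φ3 h3
  obtain ⟨φ1, h1, hF12⟩ := h12 φ2 h2
  exact ⟨φ1, h1,
    forall₂_comp (r₁ := F) (r₂ := F) (r₃ := F) (fun _ _ _ ha hb => hFt ha hb) hF12 hF23⟩

private lemma SetLt_le_trans {F : Q → Q → Prop} (hFt : Transitive F)
    {P1 P2 P3 : Set (List Q)} (h12 : SetLt F P1 P2) (h23 : SetLe F P2 P3) :
    SetLt F P1 P3 :=
  ⟨SetLe_trans hFt h12.1 h23, fun hc => h12.2 (SetLe_trans hFt h23 hc)⟩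

private lemma SetLe_lt_trans {F : Q → Q → Prop} (hFt : Transitive F)
    {P1 P2 P3 : Set (List Q)} (h12 : SetLe F P1 P2) (h23 : SetLt F P2 P3) :
    SetLt F P1 P3 :=
  ⟨SetLe_trans hFt h12 h23.1, fun hc => h23.2 (SetLe_trans hFt hc h12)⟩

private lemma SeqLt_irrefl {F : Q → Q → Prop} (hFr : Reflexive F)
    {S : List (Set (List Q))} : ¬ SeqLt F S S := by
  rintro ⟨k, hk, hlt, hbelow⟩
  exact hlt.2 (SetLe_refl hFr _)

private lemma SeqLt_trans {F : Q → Q → Prop} (hFt : Transitive F)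
    {S1 S2 S3 : List (Set (List Q))} (h12 : SeqLt F S1 S2) (h23 : SeqLt F S2 S3) :
    SeqLt F S1 S3 := by
  obtain ⟨k, hk, hlt, hbelow⟩ := h12
  obtain ⟨k', hk', hlt', hbelow'⟩ := h23
  refine ⟨min k k', by omega, ?_, ?_⟩
  · rcases lt_trichotomy k k' with h | h | h
    · rw [min_eq_left (le_of_lt h)]
      exact SetLt_le_trans hFt hlt (hbelow' k h)
    · subst h
      rw [min_self]
      exact SetLt_le_trans hFt hlt hlt'.1
    · rw [min_eq_right (le_of_lt h)]
      exact SetLe_lt_trans hFt (hbelow k' h) hlt'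
  · intro j hj
    exact SetLe_trans hFt (hbelow j (by omega)) (hbelow' j (by omega))

private lemma finite_lists_of_finite {α : Type*} {P : Set α} (hP : P.Finite) (n : ℕ) :
    {L : List α | L.length ≤ n ∧ ∀ x ∈ L, x ∈ P}.Finite := by
  induction n with
  | zero =>
    refine Set.Finite.subset (Set.finite_singleton []) ?_
    rintro L ⟨hL, -⟩
    simp only [Nat.le_zero, List.length_eq_zero_iff] at hL
    simp [hL]
  | succ n ih =>
    refine Set.Finite.subset ((Set.finite_singleton ([] : List α)).union
      (Set.Finite.image2 (fun a l => a :: l) hP ih)) ?_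
    rintro L ⟨hL, hmem⟩
    cases L with
    | nil => exact Or.inl rfl
    | cons a t =>
      refine Or.inr (Set.mem_image2.mpr ⟨a, hmem a (by simp), t, ⟨?_, ?_⟩, rfl⟩)
      · simpa using hL
      · exact fun x hx => hmem x (by simp [hx])

private lemma exists_strong [Finite Q] {A : ABA σ Q} {w : ℕ → σ} {F B M : Q → Q → Prop}
    (hne : A.NoEmpty) (hFr : Reflexive F) (hFt : Transitive F) (hF : ForwardSim A F)
    (hunamb : Unambiguous A F) (hBr : Reflexive B) (hBt : Transitive B)
    (hB : BackwardSim A F B) (hM : IsMediated F B M)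
    {T : Set (List Q)} (hT : IsPartialRun A w T) {ext : List Q → Q}
    {V' : Set (List Q)} (hV' : IsPartialRun A w V') (hwx : TrWExt A M B ext T V')
    {τ' : List Q} (hτ'V : τ' ∈ V') (hτ'ne : τ' ≠ [])
    (hτ'b : ¬ IsBranch (swT A F ext T V') τ') :
    ∃ W, IsPartialRun A w W ∧ TrWExt A M B ext T W ∧
      (∀ p r, [p] ∈ V' → [r] ∈ W → B p r) ∧ swT A F ext T W = ∅ := by
  classical
  obtain ⟨D, hDub⟩ := (hT.finite.image List.length).bddAbove
  have hD : ∀ π ∈ T, π.length ≤ D := fun π hπ => hDub ⟨π, hπ, rfl⟩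
  -- every tree weakly covering T has short paths
  have hlenV : ∀ V₁, IsPartialRun A w V₁ → TrWExt A M B ext T V₁ →
      ∀ θ ∈ V₁, θ.length ≤ D := by
    intro V₁ hV₁ hwx₁ θ hθ
    obtain ⟨ψ, hpre, hψbr⟩ := exists_branch_ge hV₁.tree hV₁.finite hθ
    obtain ⟨π, hπbr, hπα, -⟩ := hwx₁.1 ψ hψbr
    have h1 : θ.length ≤ ψ.length := hpre.length_le
    have h2 : ψ.length = π.length := (List.Forall₂.length_eq hπα).symm
    have h3 : π.length ≤ D := hD π hπbr.1
    omega
  set U : Set (List Q) := {l | l.length ≤ D} with hU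
  set G : Set (List (Set (List Q))) :=
    {L | L.length ≤ D + 1 ∧ ∀ s ∈ L, ∀ x ∈ s, x ∈ U} with hG
  have hGfin : G.Finite := by
    have h := finite_lists_of_finite (P := {s : Set (List Q) | ∀ x ∈ s, x ∈ U})
      ((finite_len_le D).finite_subsets.subset (by
        intro s hs
        exact fun x hx => hs x hx)) (D + 1)
    exact h.subset (fun L hL => ⟨hL.1, hL.2⟩)
  have hGmem : ∀ V₁, IsPartialRun A w V₁ → TrWExt A M B ext T V₁ →
      ∀ τ₁ ∈ V₁, τ₁ ≠ [] → seqOf (swT A F ext T V₁) τ₁ ∈ G := by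
    intro V₁ hV₁ hwx₁ τ₁ hτ₁ hτ₁ne
    have hXV₁ : swT A F ext T V₁ ⊆ V₁ := by
      rintro ρ ⟨hne', ψ, hψb, hψs, hpre⟩
      exact hV₁.tree.prefix_closed ψ hψb.1 ρ hpre hne'
    constructor
    · rw [seqOf_length hτ₁ne]
      have := hlenV V₁ hV₁ hwx₁ τ₁ hτ₁
      omega
    · intro s hs x hx
      cases τ₁ with
      | nil => exact absurd rfl hτ₁ne
      | cons a t =>
        obtain ⟨i, hi, rfl⟩ := List.mem_map.mp hs
        obtain ⟨hx1, hx2, hx3, hx4⟩ := hx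
        have hmem : List.take (i + 1) (a :: t) ++ x ∈ V₁ := hXV₁ hx3
        have := hlenV V₁ hV₁ hwx₁ _ hmem
        have hxl : x.length ≤ (List.take (i + 1) (a :: t) ++ x).length := by
          rw [List.length_append]
          omega
        show x.length ≤ D
        omega
  have hGfinT := hGfin.to_subtype
  set rel : ↥G → ↥G → Prop := fun γ γ' => SeqLt F γ'.val γ.val with hrel
  haveI : IsTrans ↥G rel := ⟨fun a b c h1 h2 => SeqLt_trans hFt h2 h1⟩
  haveI : IsIrrefl ↥G rel := ⟨fun a h => SeqLt_irrefl hFr h⟩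
  have hwf : WellFounded rel := Finite.wellFounded_of_trans_of_irrefl rel
  suffices main : ∀ γ : ↥G, ∀ V₁ τ₁, IsPartialRun A w V₁ → TrWExt A M B ext T V₁ →
      τ₁ ∈ V₁ → τ₁ ≠ [] → ¬ IsBranch (swT A F ext T V₁) τ₁ →
      γ.val = seqOf (swT A F ext T V₁) τ₁ →
      ∃ W, IsPartialRun A w W ∧ TrWExt A M B ext T W ∧
        (∀ p r, [p] ∈ V₁ → [r] ∈ W → B p r) ∧ swT A F ext T W = ∅ by
    exact main ⟨_, hGmem V' hV' hwx τ' hτ'V hτ'ne⟩ V' τ' hV' hwx hτ'V hτ'ne hτ'b rfl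
  intro γ
  induction γ using hwf.induction with
  | _ γ' ih =>
    intro V₁ τ₁ hV₁ hwx₁ hτ₁V hτ₁ne hτ₁b henc
    by_cases hempty : swT A F ext T V₁ = ∅
    · refine ⟨V₁, hV₁, hwx₁, ?_, hempty⟩
      intro p r hp hr
      obtain ⟨q₀, hq₀, hq₀u⟩ := hV₁.tree.root
      rw [hq₀u p hp, hq₀u r hr]
      exact hBr q₀
    · have hXne : (swT A F ext T V₁).Nonempty := Set.nonempty_iff_ne_empty.mpr hempty
      obtain ⟨W1, τ1, hW1run, hW1wx, hW1root, hτ1W, hτ1ne, hτ1b, hSeq⟩ :=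
        progress hne hFr hFt hF hunamb hBt hB hM hV₁ hwx₁ hτ₁V hτ₁b hXne
      have henc1 : seqOf (swT A F ext T W1) τ1 ∈ G := hGmem W1 hW1run hW1wx τ1 hτ1W hτ1ne
      have hrel1 : rel ⟨_, henc1⟩ γ' := by
        show SeqLt F γ'.val _
        rw [henc]
        exact hSeq
      obtain ⟨W, hWrun, hWwx, hWroot, hWsw⟩ :=
        ih ⟨_, henc1⟩ hrel1 W1 τ1 hW1run hW1wx hτ1W hτ1ne hτ1b rfl
      refine ⟨W, hWrun, hWwx, ?_, hWsw⟩
      intro p r hp hr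
      obtain ⟨q₀, hq₀, -⟩ := hW1run.tree.root
      exact hBt (hW1root p q₀ hp hq₀) (hWroot q₀ r hq₀ hr)

end Stmt12WF

/-- The progress lemma: if `V` weakly but not strongly covers `T` w.r.t. `ext`, and
`τ_V ∈ V ∪ {ε}` is not a branch of `sw_T(V)`, then there are a partial run `W` weakly
covering `T` and a path `τ_W ∈ W` not a branch of `sw_T(W)` such that `W` covers `T`
more strongly than `V` w.r.t. `τ_V, τ_W`, i.e. `root(V) ≼_B root(W)` and
`⟨τ_V, sw_T(V)⟩ ⊏ ⟨τ_W, sw_T(W)⟩`. -/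
theorem stmt_12 [Finite σ] [Finite Q] (A : ABA σ Q) (hne : A.NoEmpty)
    (F B M : Q → Q → Prop)
    (hFr : Reflexive F) (hFt : Transitive F) (hF : ForwardSim A F)
    (hunamb : Unambiguous A F)
    (hBr : Reflexive B) (hBt : Transitive B) (hB : BackwardSim A F B)
    (hM : IsMediated F B M)
    (w : ℕ → σ) (T : Set (List Q)) (hT : IsPartialRun A w T)
    (ext : List Q → Q) (hext : IsExtFun A M T ext)
    (V : Set (List Q)) (hV : IsPartialRun A w V)
    (hwext : TrWExt A M B ext T V) (hnext : ¬ TrExt A F B ext T V)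
    (τV : List Q) (hτV : τV ∈ V ∨ τV = [])
    (hτVb : ¬ IsBranch (swT A F ext T V) τV) :
    ∃ (W : Set (List Q)) (τW : List Q),
      IsPartialRun A w W ∧ TrWExt A M B ext T W ∧
      τW ∈ W ∧ ¬ IsBranch (swT A F ext T W) τW ∧
      (∀ p r, [p] ∈ V → [r] ∈ W → B p r) ∧
      SeqLt F (seqOf (swT A F ext T V) τV) (seqOf (swT A F ext T W) τW) := by
  classical
  have hstr_ex : ∃ ψ, IsBranch V ψ ∧ ¬ ∃ π, IsBranch T π ∧ BrExt A F ext π ψ := by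
    by_contra hc
    push_neg at hc
    exact hnext ⟨fun ψ hψ => hc ψ hψ, hwext.2⟩
  obtain ⟨ψ₀, hψ₀br, hψ₀str⟩ := hstr_ex
  have hψ₀X : IsBranch (swT A F ext T V) ψ₀ :=
    (branch_swT_iff A F ext hV.tree).mpr ⟨hψ₀br, hψ₀str⟩
  rcases hτV with hτV | rfl
  · obtain ⟨W, τW, h1, h2, h3, h4, h5, h6, h7⟩ :=
      progress hne hFr hFt hF hunamb hBt hB hM hV hwext hτV hτVb ⟨ψ₀, hψ₀X.1⟩
    exact ⟨W, τW, h1, h2, h4, h6, h3, h7⟩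
  · obtain ⟨p₀, hp₀, hp₀u⟩ := hV.tree.root
    have hW : ∃ W, IsPartialRun A w W ∧ TrWExt A M B ext T W ∧
        (∀ p r, [p] ∈ V → [r] ∈ W → B p r) ∧ swT A F ext T W = ∅ := by
      by_cases hb : IsBranch (swT A F ext T V) [p₀]
      · obtain ⟨hbV, hbstr⟩ := (branch_swT_iff A F ext hV.tree).mp hb
        obtain ⟨W, sp, hWrun, hWwx, hWroot, hspW, hsplen, hspnot, hS1⟩ :=
          surgery hne hFt hF hBt hB hM hV hwext hbV hbstr
        refine ⟨W, hWrun, hWwx, hWroot, ?_⟩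
        by_contra hc
        obtain ⟨ρ, hρ⟩ := Set.nonempty_iff_ne_empty.mpr hc
        obtain ⟨hne', ψ, hψb, hψs, hpre⟩ := hρ
        have hψX : IsBranch (swT A F ext T W) ψ :=
          (branch_swT_iff A F ext hWrun.tree).mpr ⟨hψb, hψs⟩
        obtain ⟨j, u, v, hj1, hj2, -⟩ := hS1 ψ hψX
        simp only [List.length_cons, List.length_nil] at hj2
        omega
      · exact exists_strong hne hFr hFt hF hunamb hBr hBt hB hM hT hV hwext
          hp₀ (by simp) hb
    obtain ⟨W, hWrun, hWwx, hWroot, hWsw⟩ := hW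
    obtain ⟨q₀, hq₀, -⟩ := hWrun.tree.root
    refine ⟨W, [q₀], hWrun, hWwx, hq₀, ?_, hWroot, ?_⟩
    · intro hbr
      rw [hWsw] at hbr
      exact absurd hbr.1 (Set.notMem_empty _)
    · refine ⟨0, ?_, ?_, ?_⟩
      · simp [seqOf]
      · have hgd1 : (seqOf (swT A F ext T V) []).getD 0 ∅ =
            {π | IsBranch (swT A F ext T V) π} := by simp [seqOf]
        have hgd2 : (seqOf (swT A F ext T W) [q₀]).getD 0 ∅ =
            ominus (swT A F ext T W) [q₀] 1 :=
          seqOf_getD (by simp) (by simp)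
        rw [hgd1, hgd2]
        constructor
        · intro χ hχ
          obtain ⟨h1, h2, h3, h4⟩ := hχ
          rw [hWsw] at h3
          exact absurd h3 (Set.notMem_empty _)
        · intro hSLe
          obtain ⟨φ, hφ, -⟩ := hSLe ψ₀ hψ₀X
          obtain ⟨h1, h2, h3, h4⟩ := hφ
          rw [hWsw] at h3
          exact absurd h3 (Set.notMem_empty _)
      · intro j hj
        omega
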